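/- arXiv:1802.05127 — 3 statements merged into one kernel-verified Lean document; each statement's English description precedes it below -/
import Mathlib

section
/- Expected local degree distribution in the SPA model: Let B be a ball in S of volume b = b(n) and t = t(n) ∈ ℕ with bt → ∞ as n → ∞. Then for each fixed i ≥ 0, the expected number of vertices in B of in-degree i at time t satisfies E(N_{i,t}) = (1+o(1))·c_i·bt, where c_0 = 1/(1+pA2) and c_i = c_{i−1}·p·(A1(i−1)+A2)/(1+p(A1·i+A2)) for i ≥ 1. -/
open MeasureTheory ProbabilityTheory Filter

noncomputable section

abbrev SPATorus (m : ℕ) := Fin m → AddCircle (1 : ℝ)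

def torusRad (m : ℕ) (vol : ℝ) : ℝ := vol ^ ((1 : ℝ) / m) / 2

open Classical in
def spaInDeg (p A1 A2 : ℝ) (m : ℕ) (x : ℕ → SPATorus m) (u : ℕ → ℕ → ℝ) (s : ℕ) : ℕ → ℕ
  | 0 => 0
  | t + 1 =>
    spaInDeg p A1 A2 m x u s t +
      (if 1 ≤ s ∧ s ≤ t ∧
          dist (x (t + 1)) (x s) ≤
            torusRad m (min ((A1 * (spaInDeg p A1 A2 m x u s t : ℝ) + A2) / (t : ℝ)) 1) ∧
          u (t + 1) s ≤ p
        then 1 else 0)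

def spaEdge (p A1 A2 : ℝ) (m : ℕ) (x : ℕ → SPATorus m) (u : ℕ → ℕ → ℝ) (a b : ℕ) : Prop :=
  1 ≤ b ∧ b < a ∧ spaInDeg p A1 A2 m x u b a = spaInDeg p A1 A2 m x u b (a - 1) + 1

open Classical in
/-- The set of in-neighbours of `v` at time `t`. -/
def spaInNbrs (p A1 A2 : ℝ) (m : ℕ) (x : ℕ → SPATorus m) (u : ℕ → ℕ → ℝ) (v t : ℕ) :
    Finset ℕ :=
  (Finset.range (t + 1)).filter fun a => spaEdge p A1 A2 m x u a v

open Classical in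
/-- Directed edges of the SPA graph going from the set `B` to the set `C`. -/
def spaEdgesBetween (p A1 A2 : ℝ) (m : ℕ) (x : ℕ → SPATorus m) (u : ℕ → ℕ → ℝ)
    (B C : Finset ℕ) : Finset (ℕ × ℕ) :=
  (B ×ˢ C).filter fun q => spaEdge p A1 A2 m x u q.1 q.2

/-- The directed local clustering coefficient `c⁻(v,n)`. -/
def spaCMinus (p A1 A2 : ℝ) (m : ℕ) (x : ℕ → SPATorus m) (u : ℕ → ℕ → ℝ) (v n : ℕ) : ℝ :=
  ((spaEdgesBetween p A1 A2 m x u (spaInNbrs p A1 A2 m x u v n)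
      (spaInNbrs p A1 A2 m x u v n)).card : ℝ) /
    ((spaInDeg p A1 A2 m x u v n : ℝ) * ((spaInDeg p A1 A2 m x u v n : ℝ) - 1) / 2)

open Classical in
/-- `T̂_v`: the smallest time `t` at which the in-degree of `v` exceeds the threshold `w`
(and `n` if the in-degree never exceeds `w` by time `n`). -/
def spaThat (p A1 A2 : ℝ) (m : ℕ) (x : ℕ → SPATorus m) (u : ℕ → ℕ → ℝ) (w : ℝ) (v n : ℕ) : ℕ :=
  if h : ∃ t, w < (spaInDeg p A1 A2 m x u v t : ℝ) ∧ t ≤ n then Nat.find h else n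

/-- The set `E_old` of edges between in-neighbours of `v` with head an old neighbour. -/
def spaEold (p A1 A2 : ℝ) (m : ℕ) (x : ℕ → SPATorus m) (u : ℕ → ℕ → ℝ) (w : ℝ) (v n : ℕ) :
    Finset (ℕ × ℕ) :=
  spaEdgesBetween p A1 A2 m x u (spaInNbrs p A1 A2 m x u v n)
    (spaInNbrs p A1 A2 m x u v (spaThat p A1 A2 m x u w v n))

/-- `c_old(v,n)`. -/
def spaCold (p A1 A2 : ℝ) (m : ℕ) (x : ℕ → SPATorus m) (u : ℕ → ℕ → ℝ) (w : ℝ) (v n : ℕ) : ℝ :=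
  ((spaEold p A1 A2 m x u w v n).card : ℝ) /
    ((spaInDeg p A1 A2 m x u v n : ℝ) * ((spaInDeg p A1 A2 m x u v n : ℝ) - 1) / 2)

/-- `c_new(v,n)`. -/
def spaCnew (p A1 A2 : ℝ) (m : ℕ) (x : ℕ → SPATorus m) (u : ℕ → ℕ → ℝ) (w : ℝ) (v n : ℕ) : ℝ :=
  (((spaEdgesBetween p A1 A2 m x u (spaInNbrs p A1 A2 m x u v n) (spaInNbrs p A1 A2 m x u v n)
      \ spaEold p A1 A2 m x u w v n).card : ℕ) : ℝ) /
    ((spaInDeg p A1 A2 m x u v n : ℝ) * ((spaInDeg p A1 A2 m x u v n : ℝ) - 1) / 2)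

open Classical in
/-- The out-degree of vertex `i` (all out-edges are created at its birth time `i`). -/
def spaOutDeg (p A1 A2 : ℝ) (m : ℕ) (x : ℕ → SPATorus m) (u : ℕ → ℕ → ℝ) (i : ℕ) : ℕ :=
  ((Finset.range i).filter fun b => spaEdge p A1 A2 m x u i b).card

open Classical in
/-- `N_{i,t}(B)`: the number of vertices in the closed ball of radius `r` about `z`
having in-degree exactly `i` at time `t`. -/
def spaNBall (p A1 A2 : ℝ) (m : ℕ) (x : ℕ → SPATorus m) (u : ℕ → ℕ → ℝ)
    (z : SPATorus m) (r : ℝ) (i t : ℕ) : ℕ :=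
  ((Finset.Icc 1 t).filter fun s =>
    x s ∈ Metric.closedBall z r ∧ spaInDeg p A1 A2 m x u s t = i).card

/-- The constants `c_i` of the SPA degree distribution. -/
def spaC (p A1 A2 : ℝ) : ℕ → ℝ
  | 0 => 1 / (1 + p * A2)
  | i + 1 => spaC p A1 A2 i * p * (A1 * i + A2) / (1 + p * (A1 * (i + 1) + A2))

/-- The index type for the driving randomness: positions and coins. -/
def SPAIndex : Type := ℕ ⊕ ℕ × ℕ

/-- Codomain family : positions live in the torus and coins in `ℝ`. -/
def spaMix (m : ℕ) : SPAIndex → Type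
  | Sum.inl _ => SPATorus m
  | Sum.inr _ => ℝ

instance (m : ℕ) (i : SPAIndex) : MeasurableSpace (spaMix m i) :=
  match i with
  | Sum.inl _ => inferInstanceAs (MeasurableSpace (SPATorus m))
  | Sum.inr _ => inferInstanceAs (MeasurableSpace ℝ)

/-- The family of all driving random variables. -/
def spaFam (m : ℕ) {Ω : Type} (X : ℕ → Ω → SPATorus m) (U : ℕ → ℕ → Ω → ℝ) :
    ∀ i : SPAIndex, Ω → spaMix m i
  | Sum.inl a => X a
  | Sum.inr ab => U ab.1 ab.2

/-- `X, U` drive an SPA process: the positions `X n` are independent uniform points of the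
torus, and the coins `U a b` are independent uniform points of `[0,1]`, all jointly
independent. -/
structure IsSPASource (m : ℕ) {Ω : Type} [MeasureSpace Ω]
    (X : ℕ → Ω → SPATorus m) (U : ℕ → ℕ → Ω → ℝ) : Prop where
  measurable_X : ∀ a, Measurable (X a)
  measurable_U : ∀ a b, Measurable (U a b)
  law_X : ∀ a, Measure.map (X a) ℙ = (volume : Measure (SPATorus m))
  law_U : ∀ a b, Measure.map (U a b) ℙ = (volume : Measure ℝ).restrict (Set.Icc 0 1)
  indep : iIndepFun (spaFam m X U) ℙ

/-- Real-valued in-degree of vertex `s` at time `t`, as a function of the sample point. -/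
def spaDegR (p A1 A2 : ℝ) (m : ℕ) {Ω : Type} (X : ℕ → Ω → SPATorus m)
    (U : ℕ → ℕ → Ω → ℝ) (ωp : Ω) (s t : ℕ) : ℝ :=
  (spaInDeg p A1 A2 m (fun a => X a ωp) (fun a b => U a b ωp) s t : ℝ)


section SPAAux

open Classical in
lemma spaInDeg_succ (p A1 A2 : ℝ) (m : ℕ) (x : ℕ → SPATorus m) (u : ℕ → ℕ → ℝ) (s t : ℕ) :
    spaInDeg p A1 A2 m x u s (t + 1) =
      spaInDeg p A1 A2 m x u s t +
      (if 1 ≤ s ∧ s ≤ t ∧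
          dist (x (t + 1)) (x s) ≤
            torusRad m (min ((A1 * (spaInDeg p A1 A2 m x u s t : ℝ) + A2) / (t : ℝ)) 1) ∧
          u (t + 1) s ≤ p
        then 1 else 0) := rfl

lemma spaInDeg_eq_zero (p A1 A2 : ℝ) (m : ℕ) (x : ℕ → SPATorus m) (u : ℕ → ℕ → ℝ) :
    ∀ t s : ℕ, t < s → spaInDeg p A1 A2 m x u s t = 0 := by
  intro t
  induction t with
  | zero => intro s _; rfl
  | succ t ih =>
    intro s h
    rw [spaInDeg_succ, ih s (Nat.lt_of_succ_lt h), if_neg, add_zero]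
    rintro ⟨-, h2, -⟩
    omega

lemma spaInDeg_self (p A1 A2 : ℝ) (m : ℕ) (x : ℕ → SPATorus m) (u : ℕ → ℕ → ℝ) (s : ℕ) :
    spaInDeg p A1 A2 m x u s s = 0 := by
  cases s with
  | zero => rfl
  | succ t =>
    rw [spaInDeg_succ, spaInDeg_eq_zero p A1 A2 m x u t (t+1) (Nat.lt_succ_self t),
      if_neg (by rintro ⟨-, h2, -⟩; omega)]

lemma spaInDeg_congr (p A1 A2 : ℝ) (m : ℕ) :
    ∀ (t : ℕ) (x x' : ℕ → SPATorus m) (u u' : ℕ → ℕ → ℝ),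
      (∀ a, 1 ≤ a → a ≤ t → x a = x' a) → (∀ a b, a ≤ t → b ≤ t → u a b = u' a b) →
      ∀ s, spaInDeg p A1 A2 m x u s t = spaInDeg p A1 A2 m x' u' s t := by
  intro t
  induction t with
  | zero => intro _ _ _ _ _ _ _; rfl
  | succ t ih =>
    intro x x' u u' hx hu s
    have hxt : ∀ a, 1 ≤ a → a ≤ t → x a = x' a := fun a h1 h2 => hx a h1 (h2.trans t.le_succ)
    have hut : ∀ a b, a ≤ t → b ≤ t → u a b = u' a b :=
      fun a b h1 h2 => hu a b (h1.trans t.le_succ) (h2.trans t.le_succ)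
    have hd := ih x x' u u' hxt hut s
    rw [spaInDeg_succ, spaInDeg_succ, hd]
    congr 1
    by_cases hc : 1 ≤ s ∧ s ≤ t
    · rw [hx (t+1) (by omega) le_rfl, hx s hc.1 (by omega),
        hu (t+1) s le_rfl (by omega)]
    · rw [if_neg (by tauto), if_neg (by tauto)]

lemma measurable_spaInDeg (p A1 A2 : ℝ) (m : ℕ) {E : Type*} [MeasurableSpace E]
    {x : ℕ → E → SPATorus m} {u : ℕ → ℕ → E → ℝ}
    (hx : ∀ a, Measurable (x a)) (hu : ∀ a b, Measurable (u a b)) (s : ℕ) :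
    ∀ t : ℕ,
      Measurable (fun e => spaInDeg p A1 A2 m (fun a => x a e) (fun a b => u a b e) s t) := by
  intro t
  induction t with
  | zero => exact measurable_const
  | succ t ih =>
    have hset : MeasurableSet {e : E | 1 ≤ s ∧ s ≤ t ∧
        dist (x (t+1) e) (x s e) ≤
          torusRad m (min ((A1 * (spaInDeg p A1 A2 m (fun a => x a e) (fun a b => u a b e) s t : ℝ)
            + A2) / (t : ℝ)) 1) ∧ u (t+1) s e ≤ p} := by
      by_cases hc : 1 ≤ s ∧ s ≤ t
      · have heq : {e : E | 1 ≤ s ∧ s ≤ t ∧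
            dist (x (t+1) e) (x s e) ≤
              torusRad m (min ((A1 * (spaInDeg p A1 A2 m (fun a => x a e) (fun a b => u a b e) s t : ℝ)
                + A2) / (t : ℝ)) 1) ∧ u (t+1) s e ≤ p}
            = (⋃ j : ℕ, (((fun e => spaInDeg p A1 A2 m (fun a => x a e) (fun a b => u a b e) s t) ⁻¹' {j})
                ∩ {e : E | dist (x (t+1) e) (x s e) ≤ torusRad m (min ((A1 * (j : ℝ) + A2) / (t : ℝ)) 1)}))
              ∩ {e : E | u (t+1) s e ≤ p} := by
          ext e
          simp only [Set.mem_setOf_eq, Set.mem_inter_iff, Set.mem_iUnion, Set.mem_preimage,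
            Set.mem_singleton_iff]
          constructor
          · rintro ⟨-, -, hd, hup⟩
            exact ⟨⟨_, rfl, hd⟩, hup⟩
          · rintro ⟨⟨j, hj, hd⟩, hup⟩
            rw [hj]
            exact ⟨hc.1, hc.2, hd, hup⟩
        rw [heq]
        refine MeasurableSet.inter (MeasurableSet.iUnion fun j => MeasurableSet.inter
            (ih (measurableSet_singleton j)) ?_) (measurableSet_le (hu _ _) measurable_const)
        exact measurableSet_le ((hx _).dist (hx _)) measurable_const
      · have : {e : E | 1 ≤ s ∧ s ≤ t ∧
            dist (x (t+1) e) (x s e) ≤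
              torusRad m (min ((A1 * (spaInDeg p A1 A2 m (fun a => x a e) (fun a b => u a b e) s t : ℝ)
                + A2) / (t : ℝ)) 1) ∧ u (t+1) s e ≤ p} = ∅ := by
          ext e; simp only [Set.mem_setOf_eq, Set.mem_empty_iff_false, iff_false]; tauto
        rw [this]; exact MeasurableSet.empty
    have heq : (fun e => spaInDeg p A1 A2 m (fun a => x a e) (fun a b => u a b e) s (t+1))
        = fun e => spaInDeg p A1 A2 m (fun a => x a e) (fun a b => u a b e) s t
          + ({e : E | 1 ≤ s ∧ s ≤ t ∧
              dist (x (t+1) e) (x s e) ≤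
                torusRad m (min ((A1 * (spaInDeg p A1 A2 m (fun a => x a e) (fun a b => u a b e) s t : ℝ)
                  + A2) / (t : ℝ)) 1) ∧ u (t+1) s e ≤ p}.indicator (fun _ => 1) e) := by
      funext e
      rw [spaInDeg_succ]
      congr 1
      simp only [Set.indicator_apply, Set.mem_setOf_eq]
    rw [heq]
    exact ih.add (measurable_const.indicator hset)

lemma spa_volume_closedBall (m : ℕ) (hm : 1 ≤ m) (y : SPATorus m) {v : ℝ}
    (h0 : 0 ≤ v) (h1 : v ≤ 1) :
    volume (Metric.closedBall y (torusRad m v)) = ENNReal.ofReal v := by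
  have hm' : (m : ℝ) ≠ 0 := Nat.cast_ne_zero.mpr (by omega)
  have hw0 : 0 ≤ v ^ ((1 : ℝ) / m) := Real.rpow_nonneg h0 _
  have hw1 : v ^ ((1 : ℝ) / m) ≤ 1 := Real.rpow_le_one h0 h1 (by positivity)
  have hr : 0 ≤ torusRad m v := by unfold torusRad; positivity
  rw [closedBall_pi y hr, volume_pi_pi]
  have hball : ∀ i : Fin m, volume (Metric.closedBall (y i) (torusRad m v))
      = ENNReal.ofReal (v ^ ((1 : ℝ) / m)) := by
    intro i
    rw [AddCircle.volume_closedBall]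
    congr 1
    rw [torusRad, mul_div_cancel₀ _ (two_ne_zero)]
    exact min_eq_right hw1
  rw [Finset.prod_congr rfl (fun i _ => hball i), Finset.prod_const, Finset.card_univ,
    Fintype.card_fin, ← ENNReal.ofReal_pow hw0]
  congr 1
  rw [← Real.rpow_natCast (v ^ ((1 : ℝ) / m)) m, ← Real.rpow_mul h0,
    one_div_mul_cancel hm', Real.rpow_one]


end SPAAux

section SPAProb

instance : DecidableEq SPAIndex := inferInstanceAs (DecidableEq (ℕ ⊕ ℕ × ℕ))

/-- Indices of the randomness revealed up to time `t`. -/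
def spaPast (t : ℕ) : Finset SPAIndex :=
  ((Finset.range (t+1)).image Sum.inl) ∪
    (((Finset.range (t+1)) ×ˢ (Finset.range (t+1))).image Sum.inr)

lemma mem_spaPast_inl {t a : ℕ} : Sum.inl a ∈ spaPast t ↔ a ≤ t := by
  constructor
  · intro h
    rcases Finset.mem_union.mp h with h | h
    · obtain ⟨b, hb, hba⟩ := Finset.mem_image.mp h
      have := Finset.mem_range.mp hb
      have hb' : b = a := Sum.inl.inj hba
      omega
    · obtain ⟨b, -, hba⟩ := Finset.mem_image.mp h
      exact absurd hba Sum.inr_ne_inl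
  · intro h
    exact Finset.mem_union_left _ (Finset.mem_image_of_mem _ (Finset.mem_range.mpr (by omega)))

lemma mem_spaPast_inr {t : ℕ} {ab : ℕ × ℕ} :
    Sum.inr ab ∈ spaPast t ↔ ab.1 ≤ t ∧ ab.2 ≤ t := by
  constructor
  · intro h
    rcases Finset.mem_union.mp h with h | h
    · obtain ⟨b, -, hba⟩ := Finset.mem_image.mp h
      exact absurd hba Sum.inl_ne_inr
    · obtain ⟨b, hb, hba⟩ := Finset.mem_image.mp h
      have hb' : b = ab := Sum.inr.inj hba
      subst hb'
      rw [Finset.mem_product, Finset.mem_range, Finset.mem_range] at hb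
      omega
  · intro h
    exact Finset.mem_union_right _ (Finset.mem_image_of_mem _
      (Finset.mem_product.mpr ⟨Finset.mem_range.mpr (by omega), Finset.mem_range.mpr (by omega)⟩))

open Classical in
def spaRecX (m t a : ℕ) (w : ∀ i : (spaPast t : Finset SPAIndex), spaMix m i) : SPATorus m :=
  if h : Sum.inl a ∈ spaPast t then w ⟨Sum.inl a, h⟩ else fun _ => 0

open Classical in
def spaRecU (m t a b : ℕ) (w : ∀ i : (spaPast t : Finset SPAIndex), spaMix m i) : ℝ :=
  if h : Sum.inr (a, b) ∈ spaPast t then w ⟨Sum.inr (a, b), h⟩ else 0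

lemma measurable_spaRecX (m t a : ℕ) : Measurable (spaRecX m t a) := by
  unfold spaRecX
  by_cases h : Sum.inl a ∈ spaPast t
  · exact (congrArg Measurable (funext fun w => dif_pos h)).mpr (measurable_pi_apply _)
  · convert (measurable_const : Measurable fun _ : (∀ i : (spaPast t : Finset SPAIndex), spaMix m i) => (fun _ => 0 : SPATorus m)) using 1
    exact funext fun w => dif_neg h

lemma measurable_spaRecU (m t a b : ℕ) : Measurable (spaRecU m t a b) := by
  unfold spaRecU
  by_cases h : Sum.inr (a, b) ∈ spaPast t
  · exact (congrArg Measurable (funext fun w => dif_pos h)).mpr (measurable_pi_apply _)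
  · convert (measurable_const : Measurable fun _ : (∀ i : (spaPast t : Finset SPAIndex), spaMix m i) => (0 : ℝ)) using 1
    exact funext fun w => dif_neg h

def spaGP (m : ℕ) {Ω : Type} (X : ℕ → Ω → SPATorus m) (U : ℕ → ℕ → Ω → ℝ) (t : ℕ) :
    Ω → ∀ i : (spaPast t : Finset SPAIndex), spaMix m i := fun ω i => spaFam m X U i ω

variable {m : ℕ} {Ω : Type} [MeasureSpace Ω] [IsProbabilityMeasure (ℙ : Measure Ω)]
  {X : ℕ → Ω → SPATorus m} {U : ℕ → ℕ → Ω → ℝ}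

lemma measurable_spaFam (hXU : IsSPASource m X U) : ∀ i, Measurable (spaFam m X U i)
  | Sum.inl a => hXU.measurable_X a
  | Sum.inr ab => hXU.measurable_U ab.1 ab.2

lemma measurable_spaGP (hXU : IsSPASource m X U) (t : ℕ) : Measurable (spaGP m X U t) :=
  measurable_pi_lambda _ fun i => measurable_spaFam hXU i

lemma spaRecX_spaGP {t a : ℕ} (ha : a ≤ t) (ω : Ω) :
    spaRecX m t a (spaGP m X U t ω) = X a ω := by
  unfold spaRecX spaGP
  refine (dif_pos (mem_spaPast_inl.mpr ha)).trans ?_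
  rfl

lemma spaRecU_spaGP {t a b : ℕ} (ha : a ≤ t) (hb : b ≤ t) (ω : Ω) :
    spaRecU m t a b (spaGP m X U t ω) = U a b ω := by
  unfold spaRecU spaGP
  refine (dif_pos (mem_spaPast_inr.mpr ⟨ha, hb⟩)).trans ?_
  rfl

/-- The core independence computation. -/
lemma spa_core (hXU : IsSPASource m X U) (t s : ℕ) (hs : s ≤ t)
    (M0 : Set (∀ i : (spaPast t : Finset SPAIndex), spaMix m i)) (hM0 : MeasurableSet M0)
    (r : ℝ) (V : ENNReal) (hvol : ∀ y : SPATorus m, volume (Metric.closedBall y r) = V)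
    (pr : ℝ) (h0p : 0 ≤ pr) (hp1 : pr ≤ 1) :
    ℙ {ω | spaGP m X U t ω ∈ M0 ∧ dist (X (t+1) ω) (X s ω) ≤ r ∧ U (t+1) s ω ≤ pr}
      = ℙ {ω | spaGP m X U t ω ∈ M0} * V * ENNReal.ofReal pr := by
  classical
  have hFam := measurable_spaFam hXU
  have hg : Measurable (spaGP m X U t) := measurable_spaGP hXU t
  have hX1 : Measurable (X (t+1)) := hXU.measurable_X _
  have hZ : Measurable (U (t+1) s) := hXU.measurable_U _ _
  set C : Set ((∀ i : (spaPast t : Finset SPAIndex), spaMix m i) × SPATorus m) :=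
    {q | q.1 ∈ M0 ∧ dist q.2 (spaRecX m t s q.1) ≤ r} with hCdef
  have hC : MeasurableSet C := by
    have h1 : C = (Prod.fst ⁻¹' M0) ∩ {q | dist q.2 (spaRecX m t s q.1) ≤ r} := rfl
    rw [h1]
    exact (hM0.preimage measurable_fst).inter
      (measurableSet_le (measurable_snd.dist ((measurable_spaRecX m t s).comp measurable_fst))
        measurable_const)
  have hWmeas : Measurable (fun ω => (spaGP m X U t ω, X (t+1) ω)) := hg.prodMk hX1
  have hev : {ω | spaGP m X U t ω ∈ M0 ∧ dist (X (t+1) ω) (X s ω) ≤ r ∧ U (t+1) s ω ≤ pr}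
      = (fun ω => (spaGP m X U t ω, X (t+1) ω)) ⁻¹' C ∩ (U (t+1) s) ⁻¹' (Set.Iic pr) := by
    ext ω
    simp only [Set.mem_setOf_eq, Set.mem_inter_iff, Set.mem_preimage, Set.mem_Iic, hCdef]
    rw [spaRecX_spaGP hs ω]
    tauto
  have hdisj1 : Disjoint (insert (Sum.inl (t+1)) (spaPast t))
      ({Sum.inr (t+1, s)} : Finset SPAIndex) := by
    refine Finset.disjoint_singleton_right.mpr fun h => ?_
    rcases Finset.mem_insert.mp h with h | h
    · exact absurd h Sum.inr_ne_inl
    · exact absurd (mem_spaPast_inr.mp h).1 (by simp)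
  have hind1 := hXU.indep.indepFun_finset _ _ hdisj1 hFam
  have hWZ : IndepFun (fun ω => (spaGP m X U t ω, X (t+1) ω)) (U (t+1) s) ℙ := by
    let φ : (∀ i : (insert (Sum.inl (t+1)) (spaPast t) : Finset SPAIndex), spaMix m i) →
        (∀ i : (spaPast t : Finset SPAIndex), spaMix m i) × SPATorus m :=
      fun w => (fun i => w ⟨i, Finset.mem_insert_of_mem i.2⟩,
        w ⟨Sum.inl (t+1), Finset.mem_insert_self _ _⟩)
    have hφ : Measurable φ :=
      Measurable.prodMk (measurable_pi_lambda _ fun i => measurable_pi_apply _)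
        (measurable_pi_apply _)
    let ψ : (∀ i : (({Sum.inr (t+1, s)} : Finset SPAIndex) : Finset SPAIndex), spaMix m i) → ℝ :=
      fun w => w ⟨Sum.inr (t+1, s), Finset.mem_singleton_self _⟩
    have hψ : Measurable ψ := measurable_pi_apply _
    exact hind1.comp hφ hψ
  rw [hev, hWZ.measure_inter_preimage_eq_mul _ _ hC measurableSet_Iic]
  have hZlaw : ℙ ((U (t+1) s) ⁻¹' (Set.Iic pr)) = ENNReal.ofReal pr := by
    rw [← Measure.map_apply hZ measurableSet_Iic, hXU.law_U,
      Measure.restrict_apply measurableSet_Iic]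
    have h2 : Set.Iic pr ∩ Set.Icc 0 1 = Set.Icc 0 pr := by
      ext y
      simp only [Set.mem_inter_iff, Set.mem_Iic, Set.mem_Icc]
      constructor
      · rintro ⟨h1, h2, h3⟩; exact ⟨h2, h1⟩
      · rintro ⟨h1, h2⟩; exact ⟨h2, h1, h2.trans hp1⟩
    rw [h2, Real.volume_Icc, sub_zero]
  have hdisj2 : Disjoint (spaPast t) ({Sum.inl (t+1)} : Finset SPAIndex) := by
    refine Finset.disjoint_singleton_right.mpr ?_
    intro h
    simpa using mem_spaPast_inl.mp h
  have hindWY : IndepFun (spaGP m X U t) (X (t+1)) ℙ := by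
    have h2 := hXU.indep.indepFun_finset _ _ hdisj2 hFam
    exact h2.comp measurable_id
      (measurable_pi_apply (⟨Sum.inl (t+1), Finset.mem_singleton_self _⟩ :
        (({Sum.inl (t+1)} : Finset SPAIndex) : Type)))
  have hmap : Measure.map (fun ω => (spaGP m X U t ω, X (t+1) ω)) ℙ
      = (Measure.map (spaGP m X U t) ℙ).prod (Measure.map (X (t+1)) ℙ) :=
    (indepFun_iff_map_prod_eq_prod_map_map hg.aemeasurable hX1.aemeasurable).mp hindWY
  have hWC : ℙ ((fun ω => (spaGP m X U t ω, X (t+1) ω)) ⁻¹' C)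
      = ℙ {ω | spaGP m X U t ω ∈ M0} * V := by
    rw [← Measure.map_apply hWmeas hC, hmap, hXU.law_X, Measure.prod_apply hC]
    have hsec : ∀ w, (volume : Measure (SPATorus m)) (Prod.mk w ⁻¹' C)
        = M0.indicator (fun _ => V) w := by
      intro w
      by_cases hw : w ∈ M0
      · have h3 : Prod.mk w ⁻¹' C = Metric.closedBall (spaRecX m t s w) r := by
          ext y
          simp only [Set.mem_preimage, Set.mem_setOf_eq, Metric.mem_closedBall, hCdef]
          exact ⟨fun h => h.2, fun h => ⟨hw, h⟩⟩
        rw [h3, hvol, Set.indicator_of_mem hw]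
      · have h3 : Prod.mk w ⁻¹' C = ∅ := by
          ext y
          simp only [Set.mem_preimage, Set.mem_setOf_eq, Set.mem_empty_iff_false, iff_false,
            hCdef]
          tauto
        rw [h3, measure_empty, Set.indicator_of_notMem hw]
    rw [lintegral_congr hsec, lintegral_indicator hM0, setLIntegral_const,
      Measure.map_apply hg hM0, mul_comm]
    rfl
  rw [hWC, hZlaw]

end SPAProb


section SPAPV

def spaD (p A1 A2 : ℝ) (m : ℕ) {Ω : Type} (X : ℕ → Ω → SPATorus m) (U : ℕ → ℕ → Ω → ℝ)
    (s t : ℕ) (ω : Ω) : ℕ :=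
  spaInDeg p A1 A2 m (fun a => X a ω) (fun a b => U a b ω) s t

def spaA (p A1 A2 : ℝ) (m : ℕ) {Ω : Type} (X : ℕ → Ω → SPATorus m) (U : ℕ → ℕ → Ω → ℝ)
    (B : Set (SPATorus m)) (s j t : ℕ) : Set Ω :=
  {ω | X s ω ∈ B ∧ spaD p A1 A2 m X U s t ω = j}

variable {m : ℕ} {p A1 A2 : ℝ} {Ω : Type} [MeasureSpace Ω] [IsProbabilityMeasure (ℙ : Measure Ω)]
  {X : ℕ → Ω → SPATorus m} {U : ℕ → ℕ → Ω → ℝ} {B : Set (SPATorus m)}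

lemma measurable_spaD (hXU : IsSPASource m X U) (s t : ℕ) :
    Measurable (spaD p A1 A2 m X U s t) :=
  measurable_spaInDeg p A1 A2 m hXU.measurable_X hXU.measurable_U s t

lemma measurable_spaA (hXU : IsSPASource m X U) (hB : MeasurableSet B) (s j t : ℕ) :
    MeasurableSet (spaA p A1 A2 m X U B s j t) :=
  (hXU.measurable_X s hB).inter (measurable_spaD hXU s t (measurableSet_singleton j))

/-- Probability that a vertex in `B` of degree `j` gains an edge at step `t+1`. -/
lemma spa_step_inc (hm : 1 ≤ m) (hp0 : 0 ≤ p) (hp1 : p ≤ 1) (hA1 : 0 ≤ A1) (hA2 : 0 ≤ A2)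
    (hXU : IsSPASource m X U) (hB : MeasurableSet B) (s j t : ℕ) (hs1 : 1 ≤ s) (hst : s ≤ t) :
    ℙ (spaA p A1 A2 m X U B s j t ∩
        {ω | dist (X (t+1) ω) (X s ω) ≤ torusRad m (min ((A1 * (j : ℝ) + A2) / (t : ℝ)) 1)
          ∧ U (t+1) s ω ≤ p})
      = ℙ (spaA p A1 A2 m X U B s j t)
          * ENNReal.ofReal (min ((A1 * (j : ℝ) + A2) / (t : ℝ)) 1) * ENNReal.ofReal p := by
  classical
  set v : ℝ := min ((A1 * (j : ℝ) + A2) / (t : ℝ)) 1 with hvdef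
  have hv0 : 0 ≤ v := le_min (by positivity) one_pos.le
  have hv1 : v ≤ 1 := min_le_right _ _
  set M0 : Set (∀ i : (spaPast t : Finset SPAIndex), spaMix m i) :=
    {w | spaRecX m t s w ∈ B ∧
      spaInDeg p A1 A2 m (fun a => spaRecX m t a w) (fun a b => spaRecU m t a b w) s t = j}
    with hM0def
  have hM0 : MeasurableSet M0 := by
    refine (MeasurableSet.preimage hB (measurable_spaRecX m t s)).inter ?_
    exact measurable_spaInDeg p A1 A2 m (fun a => measurable_spaRecX m t a)
      (fun a b => measurable_spaRecU m t a b) s t (measurableSet_singleton j)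
  have hGP : ∀ ω : Ω, (spaGP m X U t ω ∈ M0 ↔ ω ∈ spaA p A1 A2 m X U B s j t) := by
    intro ω
    have hdeg : spaInDeg p A1 A2 m (fun a => spaRecX m t a (spaGP m X U t ω))
        (fun a b => spaRecU m t a b (spaGP m X U t ω)) s t = spaD p A1 A2 m X U s t ω := by
      apply spaInDeg_congr
      · intro a _ ha2; exact spaRecX_spaGP ha2 ω
      · intro a b ha hb; exact spaRecU_spaGP ha hb ω
    simp only [hM0def, Set.mem_setOf_eq, spaA, hdeg, spaRecX_spaGP hst ω]
  have hcore := spa_core hXU t s hst M0 hM0 (torusRad m v) (ENNReal.ofReal v)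
    (fun y => spa_volume_closedBall m hm y hv0 hv1) p hp0 hp1
  have hev : {ω | spaGP m X U t ω ∈ M0 ∧ dist (X (t+1) ω) (X s ω) ≤ torusRad m v
        ∧ U (t+1) s ω ≤ p}
      = spaA p A1 A2 m X U B s j t ∩
        {ω | dist (X (t+1) ω) (X s ω) ≤ torusRad m v ∧ U (t+1) s ω ≤ p} := by
    ext ω
    simp only [Set.mem_setOf_eq, Set.mem_inter_iff, hGP ω]
  have hev2 : {ω | spaGP m X U t ω ∈ M0} = spaA p A1 A2 m X U B s j t := Set.ext hGP
  rw [hev, hev2] at hcore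
  exact hcore

/-- The dynamic increment event at step `t+1`. -/
def spaInc (p A1 A2 : ℝ) (m : ℕ) {Ω : Type} (X : ℕ → Ω → SPATorus m) (U : ℕ → ℕ → Ω → ℝ)
    (s t : ℕ) : Set Ω :=
  {ω | 1 ≤ s ∧ s ≤ t ∧
    dist (X (t+1) ω) (X s ω) ≤
      torusRad m (min ((A1 * (spaD p A1 A2 m X U s t ω : ℝ) + A2) / (t : ℝ)) 1) ∧
    U (t+1) s ω ≤ p}

open Classical in
lemma spaD_succ (s t : ℕ) (ω : Ω) :
    spaD p A1 A2 m X U s (t+1) ω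
      = spaD p A1 A2 m X U s t ω + (if ω ∈ spaInc p A1 A2 m X U s t then 1 else 0) := by
  rw [spaD, spaInDeg_succ]
  congr 1
  by_cases h : ω ∈ spaInc p A1 A2 m X U s t
  · have h' : 1 ≤ s ∧ s ≤ t ∧ dist (X (t+1) ω) (X s ω) ≤
        torusRad m (min ((A1 * (spaInDeg p A1 A2 m (fun a => X a ω) (fun a b => U a b ω) s t : ℝ)
          + A2) / (t : ℝ)) 1) ∧ U (t+1) s ω ≤ p := h
    rw [if_pos h', if_pos h]
  · have h' : ¬(1 ≤ s ∧ s ≤ t ∧ dist (X (t+1) ω) (X s ω) ≤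
        torusRad m (min ((A1 * (spaInDeg p A1 A2 m (fun a => X a ω) (fun a b => U a b ω) s t : ℝ)
          + A2) / (t : ℝ)) 1) ∧ U (t+1) s ω ≤ p) := h
    rw [if_neg h', if_neg h]

lemma measurable_spaInc (hXU : IsSPASource m X U) (s t : ℕ) :
    MeasurableSet (spaInc p A1 A2 m X U s t) := by
  by_cases hc : 1 ≤ s ∧ s ≤ t
  · have heq : spaInc p A1 A2 m X U s t
        = (⋃ j : ℕ, ((spaD p A1 A2 m X U s t ⁻¹' {j})
            ∩ {ω | dist (X (t+1) ω) (X s ω)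
                ≤ torusRad m (min ((A1 * (j : ℝ) + A2) / (t : ℝ)) 1)}))
          ∩ {ω | U (t+1) s ω ≤ p} := by
      ext ω
      simp only [spaInc, Set.mem_setOf_eq, Set.mem_inter_iff, Set.mem_iUnion, Set.mem_preimage,
        Set.mem_singleton_iff]
      constructor
      · rintro ⟨-, -, hd, hup⟩; exact ⟨⟨_, rfl, hd⟩, hup⟩
      · rintro ⟨⟨j, hj, hd⟩, hup⟩; rw [hj]; exact ⟨hc.1, hc.2, hd, hup⟩
    rw [heq]
    refine MeasurableSet.inter (MeasurableSet.iUnion fun j => MeasurableSet.inter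
        (measurable_spaD hXU s t (measurableSet_singleton j)) ?_)
      (measurableSet_le (hXU.measurable_U _ _) measurable_const)
    exact measurableSet_le ((hXU.measurable_X _).dist (hXU.measurable_X _)) measurable_const
  · have : spaInc p A1 A2 m X U s t = ∅ := by
      ext ω
      simp only [spaInc, Set.mem_setOf_eq, Set.mem_empty_iff_false, iff_false]
      tauto
    rw [this]; exact MeasurableSet.empty

lemma spaA_inter_inc (s j t : ℕ) (hs1 : 1 ≤ s) (hst : s ≤ t) :
    spaA p A1 A2 m X U B s j t ∩ spaInc p A1 A2 m X U s t
      = spaA p A1 A2 m X U B s j t ∩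
        {ω | dist (X (t+1) ω) (X s ω) ≤ torusRad m (min ((A1 * (j : ℝ) + A2) / (t : ℝ)) 1)
          ∧ U (t+1) s ω ≤ p} := by
  ext ω
  simp only [Set.mem_inter_iff, spaA, spaInc, Set.mem_setOf_eq]
  constructor
  · rintro ⟨⟨hb, hd⟩, -, -, hdist, hup⟩
    rw [hd] at hdist
    exact ⟨⟨hb, hd⟩, hdist, hup⟩
  · rintro ⟨⟨hb, hd⟩, hdist, hup⟩
    rw [← hd] at hdist
    exact ⟨⟨hb, hd⟩, hs1, hst, hdist, hup⟩

/-- Real-probability of `A ∩ Inc`. -/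
lemma spa_inc_toReal (hm : 1 ≤ m) (hp0 : 0 ≤ p) (hp1 : p ≤ 1) (hA1 : 0 ≤ A1) (hA2 : 0 ≤ A2)
    (hXU : IsSPASource m X U) (hB : MeasurableSet B) (s j t : ℕ) (hs1 : 1 ≤ s) (hst : s ≤ t) :
    (ℙ (spaA p A1 A2 m X U B s j t ∩ spaInc p A1 A2 m X U s t)).toReal
      = (ℙ (spaA p A1 A2 m X U B s j t)).toReal
          * (p * min ((A1 * (j : ℝ) + A2) / (t : ℝ)) 1) := by
  rw [spaA_inter_inc s j t hs1 hst,
    spa_step_inc hm hp0 hp1 hA1 hA2 hXU hB s j t hs1 hst,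
    ENNReal.toReal_mul, ENNReal.toReal_mul, ENNReal.toReal_ofReal hp0,
    ENNReal.toReal_ofReal (le_min (by positivity) one_pos.le)]
  ring

lemma spa_diff_toReal (hXU : IsSPASource m X U) (hB : MeasurableSet B) (s j t : ℕ) :
    (ℙ (spaA p A1 A2 m X U B s j t \ spaInc p A1 A2 m X U s t)).toReal
      = (ℙ (spaA p A1 A2 m X U B s j t)).toReal
        - (ℙ (spaA p A1 A2 m X U B s j t ∩ spaInc p A1 A2 m X U s t)).toReal := by
  have h := measure_inter_add_diff (μ := (ℙ : Measure Ω))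
    (spaA p A1 A2 m X U B s j t) (measurable_spaInc (p := p) (A1 := A1) (A2 := A2) hXU s t)
  have h2 := congrArg ENNReal.toReal h
  rw [ENNReal.toReal_add (measure_ne_top _ _) (measure_ne_top _ _)] at h2
  linarith

lemma spa_pv_zero (hm : 1 ≤ m) (hp0 : 0 ≤ p) (hp1 : p ≤ 1) (hA1 : 0 ≤ A1) (hA2 : 0 ≤ A2)
    (hXU : IsSPASource m X U) (hB : MeasurableSet B) (s t : ℕ) (hs1 : 1 ≤ s) (hst : s ≤ t) :
    (ℙ (spaA p A1 A2 m X U B s 0 (t+1))).toReal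
      = (ℙ (spaA p A1 A2 m X U B s 0 t)).toReal
          * (1 - p * min ((A1 * (0 : ℝ) + A2) / (t : ℝ)) 1) := by
  have hset : spaA p A1 A2 m X U B s 0 (t+1)
      = spaA p A1 A2 m X U B s 0 t \ spaInc p A1 A2 m X U s t := by
    ext ω
    simp only [spaA, Set.mem_setOf_eq, Set.mem_diff, spaD_succ s t ω]
    by_cases h : ω ∈ spaInc p A1 A2 m X U s t
    · simp [h]
    · simp [h]
  rw [hset, spa_diff_toReal hXU hB s 0 t,
    spa_inc_toReal hm hp0 hp1 hA1 hA2 hXU hB s 0 t hs1 hst]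
  push_cast
  ring

lemma spa_pv_succ (hm : 1 ≤ m) (hp0 : 0 ≤ p) (hp1 : p ≤ 1) (hA1 : 0 ≤ A1) (hA2 : 0 ≤ A2)
    (hXU : IsSPASource m X U) (hB : MeasurableSet B) (s j t : ℕ) (hs1 : 1 ≤ s) (hst : s ≤ t) :
    (ℙ (spaA p A1 A2 m X U B s (j+1) (t+1))).toReal
      = (ℙ (spaA p A1 A2 m X U B s (j+1) t)).toReal
          * (1 - p * min ((A1 * ((j : ℝ)+1) + A2) / (t : ℝ)) 1)
        + (ℙ (spaA p A1 A2 m X U B s j t)).toReal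
          * (p * min ((A1 * (j : ℝ) + A2) / (t : ℝ)) 1) := by
  have hset : spaA p A1 A2 m X U B s (j+1) (t+1)
      = (spaA p A1 A2 m X U B s (j+1) t \ spaInc p A1 A2 m X U s t)
        ∪ (spaA p A1 A2 m X U B s j t ∩ spaInc p A1 A2 m X U s t) := by
    ext ω
    simp only [spaA, Set.mem_setOf_eq, Set.mem_union, Set.mem_diff, Set.mem_inter_iff,
      spaD_succ s t ω]
    by_cases h : ω ∈ spaInc p A1 A2 m X U s t
    · rw [if_pos h]
      constructor
      · rintro ⟨hb, hd⟩
        right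
        exact ⟨⟨hb, by omega⟩, h⟩
      · rintro (⟨⟨hb, hd⟩, hn⟩ | ⟨⟨hb, hd⟩, -⟩)
        · exact absurd h hn
        · exact ⟨hb, by omega⟩
    · rw [if_neg h]
      constructor
      · rintro ⟨hb, hd⟩
        left
        exact ⟨⟨hb, by omega⟩, h⟩
      · rintro (⟨⟨hb, hd⟩, -⟩ | ⟨⟨hb, hd⟩, hm'⟩)
        · exact ⟨hb, by omega⟩
        · exact absurd hm' h
  have hdisj : Disjoint (spaA p A1 A2 m X U B s (j+1) t \ spaInc p A1 A2 m X U s t)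
      (spaA p A1 A2 m X U B s j t ∩ spaInc p A1 A2 m X U s t) := by
    refine Set.disjoint_left.mpr ?_
    rintro ω ⟨-, h2⟩ ⟨-, h4⟩
    exact h2 h4
  rw [hset, measure_union hdisj
    ((measurable_spaA hXU hB s j t).inter (measurable_spaInc (p := p) (A1 := A1) (A2 := A2) hXU s t)),
    ENNReal.toReal_add (measure_ne_top _ _) (measure_ne_top _ _),
    spa_diff_toReal hXU hB s (j+1) t,
    spa_inc_toReal hm hp0 hp1 hA1 hA2 hXU hB s (j+1) t hs1 hst,
    spa_inc_toReal hm hp0 hp1 hA1 hA2 hXU hB s j t hs1 hst]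
  push_cast
  ring

end SPAPV


section SPAE

def spaG (p A1 A2 : ℝ) : ℕ → ℕ → ℝ
  | _, 0 => 0
  | 0, (t+1) => spaG p A1 A2 0 t * (1 - p * min ((A1 * (0:ℝ) + A2) / (t : ℝ)) 1) + 1
  | (j+1), (t+1) => spaG p A1 A2 (j+1) t * (1 - p * min ((A1 * ((j:ℝ)+1) + A2) / (t : ℝ)) 1)
      + spaG p A1 A2 j t * (p * min ((A1 * (j:ℝ) + A2) / (t : ℝ)) 1)
  termination_by j t => (t, j)

lemma spaG_zero (p A1 A2 : ℝ) (j : ℕ) : spaG p A1 A2 j 0 = 0 := by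
  cases j <;> simp [spaG]

lemma spaG_succ_zero (p A1 A2 : ℝ) (t : ℕ) :
    spaG p A1 A2 0 (t+1) = spaG p A1 A2 0 t * (1 - p * min ((A1 * (0:ℝ) + A2) / (t : ℝ)) 1) + 1 := by
  rw [spaG]

lemma spaG_succ_succ (p A1 A2 : ℝ) (j t : ℕ) :
    spaG p A1 A2 (j+1) (t+1)
      = spaG p A1 A2 (j+1) t * (1 - p * min ((A1 * ((j:ℝ)+1) + A2) / (t : ℝ)) 1)
        + spaG p A1 A2 j t * (p * min ((A1 * (j:ℝ) + A2) / (t : ℝ)) 1) := by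
  rw [spaG]

def spaE (p A1 A2 : ℝ) (m : ℕ) {Ω : Type} [MeasureSpace Ω] (X : ℕ → Ω → SPATorus m)
    (U : ℕ → ℕ → Ω → ℝ) (B : Set (SPATorus m)) (j t : ℕ) : ℝ :=
  ∑ s ∈ Finset.Icc 1 t, (ℙ (spaA p A1 A2 m X U B s j t)).toReal

variable {m : ℕ} {p A1 A2 : ℝ} {Ω : Type} [MeasureSpace Ω] [IsProbabilityMeasure (ℙ : Measure Ω)]
  {X : ℕ → Ω → SPATorus m} {U : ℕ → ℕ → Ω → ℝ} {B : Set (SPATorus m)}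

lemma spa_integral_eq (hXU : IsSPASource m X U) (z : SPATorus m) (r : ℝ) (i t : ℕ) :
    (∫ ω, (spaNBall p A1 A2 m (fun a => X a ω) (fun a b' => U a b' ω) z r i t : ℝ) ∂ℙ)
      = spaE p A1 A2 m X U (Metric.closedBall z r) i t := by
  classical
  have hB : MeasurableSet (Metric.closedBall z r) := measurableSet_closedBall
  have hfun : ∀ ω : Ω, ((spaNBall p A1 A2 m (fun a => X a ω) (fun a b' => U a b' ω) z r i t : ℕ) : ℝ)
      = ∑ s ∈ Finset.Icc 1 t,
          (spaA p A1 A2 m X U (Metric.closedBall z r) s i t).indicator (fun _ => (1:ℝ)) ω := by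
    intro ω
    rw [spaNBall, Finset.card_filter, Nat.cast_sum]
    refine Finset.sum_congr rfl fun s hs => ?_
    rw [Nat.cast_ite, Nat.cast_one, Nat.cast_zero]
    by_cases h : ω ∈ spaA p A1 A2 m X U (Metric.closedBall z r) s i t
    · have h' : X s ω ∈ Metric.closedBall z r ∧
          spaInDeg p A1 A2 m (fun a => X a ω) (fun a b' => U a b' ω) s t = i := h
      rw [if_pos h', Set.indicator_of_mem h]
    · have h' : ¬(X s ω ∈ Metric.closedBall z r ∧
          spaInDeg p A1 A2 m (fun a => X a ω) (fun a b' => U a b' ω) s t = i) := h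
      rw [if_neg h', Set.indicator_of_notMem h]
  have h1 : (∫ ω, (spaNBall p A1 A2 m (fun a => X a ω) (fun a b' => U a b' ω) z r i t : ℝ) ∂ℙ)
      = ∫ ω, (∑ s ∈ Finset.Icc 1 t,
          (spaA p A1 A2 m X U (Metric.closedBall z r) s i t).indicator (fun _ => (1:ℝ)) ω) ∂ℙ :=
    integral_congr_ae (ae_of_all _ hfun)
  rw [h1, integral_finset_sum _ (fun s _ =>
    (integrable_const (1:ℝ)).indicator (measurable_spaA hXU hB s i t))]
  refine Finset.sum_congr rfl fun s hs => ?_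
  rw [integral_indicator_const (1:ℝ) (measurable_spaA hXU hB s i t), smul_eq_mul, mul_one, measureReal_def]

lemma spaA_last (hXU : IsSPASource m X U) (hB : MeasurableSet B) (t j : ℕ) :
    (ℙ (spaA p A1 A2 m X U B (t+1) j (t+1))).toReal
      = if j = 0 then ((volume : Measure (SPATorus m)) B).toReal else 0 := by
  have hD : ∀ ω : Ω, spaD p A1 A2 m X U (t+1) (t+1) ω = 0 :=
    fun ω => spaInDeg_self p A1 A2 m _ _ (t+1)
  by_cases hj : j = 0
  · subst hj
    have : spaA p A1 A2 m X U B (t+1) 0 (t+1) = X (t+1) ⁻¹' B := by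
      ext ω
      simp only [spaA, Set.mem_setOf_eq, hD ω, Set.mem_preimage, and_true]
    rw [if_pos rfl, this, ← Measure.map_apply (hXU.measurable_X (t+1)) hB, hXU.law_X]
  · have : spaA p A1 A2 m X U B (t+1) j (t+1) = ∅ := by
      ext ω
      simp only [spaA, Set.mem_setOf_eq, hD ω, Set.mem_empty_iff_false, iff_false]
      rintro ⟨-, h0⟩
      exact hj h0.symm
    rw [if_neg hj, this, measure_empty, ENNReal.toReal_zero]

lemma spaE_succ_zero (hm : 1 ≤ m) (hp0 : 0 ≤ p) (hp1 : p ≤ 1) (hA1 : 0 ≤ A1) (hA2 : 0 ≤ A2)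
    (hXU : IsSPASource m X U) (hB : MeasurableSet B) (t : ℕ) :
    spaE p A1 A2 m X U B 0 (t+1)
      = spaE p A1 A2 m X U B 0 t * (1 - p * min ((A1 * (0:ℝ) + A2) / (t : ℝ)) 1)
        + ((volume : Measure (SPATorus m)) B).toReal := by
  rw [spaE, Finset.sum_Icc_succ_top (Nat.one_le_iff_ne_zero.mpr (Nat.succ_ne_zero t)),
    spaA_last hXU hB t 0, if_pos rfl]
  congr 1
  rw [spaE, Finset.sum_mul]
  refine Finset.sum_congr rfl fun s hs => ?_
  rw [Finset.mem_Icc] at hs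
  exact spa_pv_zero hm hp0 hp1 hA1 hA2 hXU hB s t hs.1 hs.2

lemma spaE_succ_succ (hm : 1 ≤ m) (hp0 : 0 ≤ p) (hp1 : p ≤ 1) (hA1 : 0 ≤ A1) (hA2 : 0 ≤ A2)
    (hXU : IsSPASource m X U) (hB : MeasurableSet B) (j t : ℕ) :
    spaE p A1 A2 m X U B (j+1) (t+1)
      = spaE p A1 A2 m X U B (j+1) t * (1 - p * min ((A1 * ((j:ℝ)+1) + A2) / (t : ℝ)) 1)
        + spaE p A1 A2 m X U B j t * (p * min ((A1 * (j:ℝ) + A2) / (t : ℝ)) 1) := by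
  rw [spaE, Finset.sum_Icc_succ_top (Nat.one_le_iff_ne_zero.mpr (Nat.succ_ne_zero t)),
    spaA_last hXU hB t (j+1), if_neg (Nat.succ_ne_zero j), add_zero]
  rw [spaE, spaE, Finset.sum_mul, Finset.sum_mul, ← Finset.sum_add_distrib]
  refine Finset.sum_congr rfl fun s hs => ?_
  rw [Finset.mem_Icc] at hs
  exact spa_pv_succ hm hp0 hp1 hA1 hA2 hXU hB s j t hs.1 hs.2

lemma spaE_eq_spaG (hm : 1 ≤ m) (hp0 : 0 ≤ p) (hp1 : p ≤ 1) (hA1 : 0 ≤ A1) (hA2 : 0 ≤ A2)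
    (hXU : IsSPASource m X U) (hB : MeasurableSet B) :
    ∀ t j, spaE p A1 A2 m X U B j t
      = ((volume : Measure (SPATorus m)) B).toReal * spaG p A1 A2 j t := by
  intro t
  induction t with
  | zero =>
    intro j
    rw [spaE, spaG_zero]
    simp
  | succ t ih =>
    intro j
    cases j with
    | zero =>
      rw [spaE_succ_zero hm hp0 hp1 hA1 hA2 hXU hB t, spaG_succ_zero, ih 0]
      ring
    | succ j =>
      rw [spaE_succ_succ hm hp0 hp1 hA1 hA2 hXU hB j t, spaG_succ_succ, ih (j+1), ih j]
      ring

end SPAE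


section SPAAsymp

lemma spaC_pos {p A1 A2 : ℝ} (hp0 : 0 < p) (hA1 : 0 < A1) (hA2 : 0 < A2) :
    ∀ i, 0 < spaC p A1 A2 i
  | 0 => by rw [spaC]; positivity
  | (i+1) => by
    have h := spaC_pos hp0 hA1 hA2 i
    rw [spaC]
    have h1 : (0:ℝ) < A1 * i + A2 := by positivity
    have h2 : (0:ℝ) < 1 + p * (A1 * (i + 1) + A2) := by positivity
    positivity

/-- Abstract recursive bound. -/
lemma spa_abs_rec (d : ℕ → ℝ) (α K : ℝ) (hα : 0 < α) (hK : 0 ≤ K) (T : ℕ) (hT1 : 1 ≤ T)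
    (hstep : ∀ t : ℕ, T ≤ t → |d (t+1)| ≤ |d t| * (1 - α/(t:ℝ)) + K/(t:ℝ))
    (hfac : ∀ t : ℕ, T ≤ t → 0 ≤ 1 - α/(t:ℝ)) :
    ∀ t : ℕ, T ≤ t → |d t| ≤ max (|d T|) (K/α) := by
  intro t ht
  induction t, ht using Nat.le_induction with
  | base => exact le_max_left _ _
  | succ t ht ih =>
    have htpos : (0:ℝ) < (t:ℝ) := by
      have : 1 ≤ t := le_trans hT1 ht
      exact_mod_cast this
    set M := max (|d T|) (K/α) with hMdef
    have hM0 : K/α ≤ M := le_max_right _ _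
    have hMK : K ≤ M * α := by
      rw [div_le_iff₀ hα] at hM0
      linarith
    have h1 : |d (t+1)| ≤ |d t| * (1 - α/(t:ℝ)) + K/(t:ℝ) := hstep t ht
    have h2 : |d t| * (1 - α/(t:ℝ)) ≤ M * (1 - α/(t:ℝ)) :=
      mul_le_mul_of_nonneg_right ih (hfac t ht)
    have h3 : M * (1 - α/(t:ℝ)) + K/(t:ℝ) = M + (K - M*α)/(t:ℝ) := by
      field_simp
      ring
    have h4 : (K - M*α)/(t:ℝ) ≤ 0 := div_nonpos_of_nonpos_of_nonneg (by linarith) htpos.le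
    linarith

lemma spaG_bound {p A1 A2 : ℝ} (hp0 : 0 < p) (hp1 : p ≤ 1) (hA1 : 0 < A1) (hA2 : 0 < A2) :
    ∀ i : ℕ, ∃ C : ℝ, 0 ≤ C ∧ ∃ T : ℕ, 1 ≤ T ∧ ∀ t : ℕ, T ≤ t →
      |spaG p A1 A2 i t - spaC p A1 A2 i * t| ≤ C := by
  intro i
  induction i with
  | zero =>
    set a : ℝ := A1 * (0:ℝ) + A2 with hadef
    have ha : 0 < a := by rw [hadef]; positivity
    set α : ℝ := p * a with hαdef
    have hα : 0 < α := by positivity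
    set T : ℕ := max 1 ⌈a⌉₊ with hTdef
    have hT1 : 1 ≤ T := le_max_left _ _
    have hTa : ∀ t : ℕ, T ≤ t → a ≤ (t:ℝ) := by
      intro t ht
      have h1 : (⌈a⌉₊ : ℝ) ≤ (t:ℝ) := by
        exact_mod_cast le_trans (le_max_right 1 ⌈a⌉₊) ht
      exact le_trans (Nat.le_ceil a) h1
    have hfac : ∀ t : ℕ, T ≤ t → 0 ≤ 1 - α/(t:ℝ) := by
      intro t ht
      have h1 := hTa t ht
      have htpos : (0:ℝ) < (t:ℝ) := lt_of_lt_of_le ha h1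
      have : α/(t:ℝ) ≤ 1 := by
        rw [div_le_one htpos]
        calc α = p * a := rfl
          _ ≤ 1 * a := by nlinarith
          _ ≤ (t:ℝ) := by linarith
      linarith
    set d : ℕ → ℝ := fun t => spaG p A1 A2 0 t - spaC p A1 A2 0 * t with hddef
    have hstep : ∀ t : ℕ, T ≤ t → |d (t+1)| ≤ |d t| * (1 - α/(t:ℝ)) + 0/(t:ℝ) := by
      intro t ht
      have h1 := hTa t ht
      have htpos : (0:ℝ) < (t:ℝ) := lt_of_lt_of_le ha h1
      have hmin : min (a/(t:ℝ)) 1 = a/(t:ℝ) := min_eq_left ((div_le_one htpos).mpr h1)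
      have hrec : d (t+1) = d t * (1 - α/(t:ℝ)) := by
        rw [hddef]
        simp only
        rw [spaG_succ_zero, ← hadef, hmin, spaC, hαdef, hadef]
        have hden : (1:ℝ) + p * A2 ≠ 0 := by positivity
        push_cast
        field_simp
        ring
      rw [hrec, abs_mul, abs_of_nonneg (hfac t ht), zero_div, add_zero]
    have := spa_abs_rec d α 0 hα le_rfl T hT1 hstep hfac
    exact ⟨max (|d T|) (0/α), le_trans (by positivity) (le_max_left _ _), T, hT1, this⟩
  | succ i ih =>
    obtain ⟨C', hC'0, T', hT'1, hbd'⟩ := ih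
    set a : ℝ := A1 * ((i:ℝ)+1) + A2 with hadef
    set a' : ℝ := A1 * (i:ℝ) + A2 with ha'def
    have ha : 0 < a := by rw [hadef]; positivity
    have ha' : 0 < a' := by rw [ha'def]; positivity
    have ha'a : a' ≤ a := by rw [hadef, ha'def]; nlinarith
    set α : ℝ := p * a with hαdef
    have hα : 0 < α := by positivity
    set K : ℝ := p * a' * C' with hKdef
    have hK : 0 ≤ K := by positivity
    set T : ℕ := max (max 1 T') ⌈a⌉₊ with hTdef
    have hT1 : 1 ≤ T := le_trans (le_max_left 1 T') (le_max_left _ _)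
    have hTT' : T' ≤ T := le_trans (le_max_right 1 T') (le_max_left _ _)
    have hTa : ∀ t : ℕ, T ≤ t → a ≤ (t:ℝ) := by
      intro t ht
      have h1 : (⌈a⌉₊ : ℝ) ≤ (t:ℝ) := by
        exact_mod_cast le_trans (le_max_right (max 1 T') ⌈a⌉₊) ht
      exact le_trans (Nat.le_ceil a) h1
    have hfac : ∀ t : ℕ, T ≤ t → 0 ≤ 1 - α/(t:ℝ) := by
      intro t ht
      have h1 := hTa t ht
      have htpos : (0:ℝ) < (t:ℝ) := lt_of_lt_of_le ha h1
      have : α/(t:ℝ) ≤ 1 := by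
        rw [div_le_one htpos]
        calc α = p * a := rfl
          _ ≤ 1 * a := by nlinarith
          _ ≤ (t:ℝ) := by linarith
      linarith
    set d : ℕ → ℝ := fun t => spaG p A1 A2 (i+1) t - spaC p A1 A2 (i+1) * t with hddef
    set d' : ℕ → ℝ := fun t => spaG p A1 A2 i t - spaC p A1 A2 i * t with hd'def
    have hstep : ∀ t : ℕ, T ≤ t → |d (t+1)| ≤ |d t| * (1 - α/(t:ℝ)) + K/(t:ℝ) := by
      intro t ht
      have h1 := hTa t ht
      have htpos : (0:ℝ) < (t:ℝ) := lt_of_lt_of_le ha h1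
      have htne : (t:ℝ) ≠ 0 := htpos.ne'
      have hmin : min (a/(t:ℝ)) 1 = a/(t:ℝ) := min_eq_left ((div_le_one htpos).mpr h1)
      have hmin' : min (a'/(t:ℝ)) 1 = a'/(t:ℝ) :=
        min_eq_left ((div_le_one htpos).mpr (le_trans ha'a h1))
      have hrec : d (t+1) = d t * (1 - α/(t:ℝ)) + (p * a' / (t:ℝ)) * d' t := by
        rw [hddef, hd'def]
        simp only
        rw [spaG_succ_succ, ← hadef, ← ha'def, hmin, hmin']
        have hden : (1:ℝ) + p * (A1 * ((i:ℝ) + 1) + A2) ≠ 0 := by positivity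
        rw [show spaC p A1 A2 (i+1)
            = spaC p A1 A2 i * p * (A1 * i + A2) / (1 + p * (A1 * (i + 1) + A2)) from by
          rw [spaC]]
        rw [hαdef, hadef, ha'def]
        push_cast
        field_simp
        ring
      have hd'bd : |d' t| ≤ C' := hbd' t (le_trans hTT' ht)
      calc |d (t+1)| ≤ |d t * (1 - α/(t:ℝ))| + |(p * a' / (t:ℝ)) * d' t| := by
            rw [hrec]; exact abs_add_le _ _
        _ = |d t| * (1 - α/(t:ℝ)) + (p * a' / (t:ℝ)) * |d' t| := by
            rw [abs_mul, abs_of_nonneg (hfac t ht), abs_mul,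
              abs_of_nonneg (by positivity : (0:ℝ) ≤ p * a' / (t:ℝ))]
        _ ≤ |d t| * (1 - α/(t:ℝ)) + K/(t:ℝ) := by
            have : (p * a' / (t:ℝ)) * |d' t| ≤ (p * a' / (t:ℝ)) * C' :=
              mul_le_mul_of_nonneg_left hd'bd (by positivity)
            have heq : (p * a' / (t:ℝ)) * C' = K/(t:ℝ) := by rw [hKdef]; ring
            linarith
    have := spa_abs_rec d α K hα hK T hT1 hstep hfac
    exact ⟨max (|d T|) (K/α), le_trans (by positivity) (le_max_right _ _), T, hT1, this⟩

lemma spaG_tendsto {p A1 A2 : ℝ} (hp0 : 0 < p) (hp1 : p ≤ 1) (hA1 : 0 < A1) (hA2 : 0 < A2)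
    (i : ℕ) :
    Tendsto (fun t : ℕ => spaG p A1 A2 i t / (spaC p A1 A2 i * t)) atTop (nhds 1) := by
  obtain ⟨C, hC0, T, hT1, hbd⟩ := spaG_bound hp0 hp1 hA1 hA2 i
  have hc : 0 < spaC p A1 A2 i := spaC_pos hp0 hA1 hA2 i
  rw [← tendsto_sub_nhds_zero_iff]
  have hlim : Tendsto (fun t : ℕ => (C / spaC p A1 A2 i) / t) atTop (nhds 0) :=
    tendsto_const_div_atTop_nhds_zero_nat _
  refine squeeze_zero_norm' ?_ hlim
  filter_upwards [eventually_ge_atTop T, eventually_ge_atTop 1] with t ht ht1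
  have htpos : (0:ℝ) < (t:ℝ) := by exact_mod_cast ht1
  have hct : (0:ℝ) < spaC p A1 A2 i * t := by positivity
  have heq : spaG p A1 A2 i t / (spaC p A1 A2 i * t) - 1
      = (spaG p A1 A2 i t - spaC p A1 A2 i * t) / (spaC p A1 A2 i * t) := by
    field_simp
  rw [Real.norm_eq_abs, heq, abs_div, abs_of_pos hct, div_div]
  exact (div_le_div_iff_of_pos_right hct).mpr (hbd t ht)

end SPAAsymp


/-- expected local degree distribution. For a ball `B = B(n)` of volume
`b(n)` and time `t(n)` with `bt → ∞`, for each fixed `i`,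
`E(N_{i,t}) = (1+o(1)) c_i b t`. -/
theorem spa_expected_degree_distribution_in_ball
    (m : ℕ) (hm : 1 ≤ m) (p A1 A2 : ℝ)
    (hp0 : 0 < p) (hp1 : p ≤ 1) (hA1 : 0 < A1) (hA2 : 0 < A2) (hpA1 : p * A1 < 1)
    {Ω : Type} [MeasureSpace Ω] [IsProbabilityMeasure (ℙ : Measure Ω)]
    (X : ℕ → Ω → SPATorus m) (U : ℕ → ℕ → Ω → ℝ) (hXU : IsSPASource m X U)
    (z : ℕ → SPATorus m) (b : ℕ → ℝ) (hb0 : ∀ n, 0 < b n) (hb1 : ∀ n, b n ≤ 1)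
    (t : ℕ → ℕ) (hbt : Tendsto (fun n : ℕ => b n * t n) atTop atTop)
    (i : ℕ) :
    Tendsto (fun n : ℕ =>
        (∫ ωp : Ω, (spaNBall p A1 A2 m (fun a => X a ωp) (fun a b' => U a b' ωp)
            (z n) (torusRad m (b n)) i (t n) : ℝ) ∂ℙ) /
          (spaC p A1 A2 i * (b n * t n)))
      atTop (nhds 1) := by
  have hc : 0 < spaC p A1 A2 i := spaC_pos hp0 hA1 hA2 i
  have hint : ∀ n, (∫ ωp : Ω, (spaNBall p A1 A2 m (fun a => X a ωp) (fun a b' => U a b' ωp)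
      (z n) (torusRad m (b n)) i (t n) : ℝ) ∂ℙ) = b n * spaG p A1 A2 i (t n) := by
    intro n
    rw [spa_integral_eq hXU (z n) (torusRad m (b n)) i (t n),
      spaE_eq_spaG hm hp0.le hp1 hA1.le hA2.le hXU measurableSet_closedBall (t n) i,
      spa_volume_closedBall m hm (z n) (hb0 n).le (hb1 n),
      ENNReal.toReal_ofReal (hb0 n).le]
  have heq : ∀ n, (∫ ωp : Ω, (spaNBall p A1 A2 m (fun a => X a ωp) (fun a b' => U a b' ωp)
        (z n) (torusRad m (b n)) i (t n) : ℝ) ∂ℙ) / (spaC p A1 A2 i * (b n * t n))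
      = spaG p A1 A2 i (t n) / (spaC p A1 A2 i * t n) := by
    intro n
    rw [hint n,
      show spaC p A1 A2 i * (b n * (t n : ℝ)) = b n * (spaC p A1 A2 i * (t n : ℝ)) from by ring]
    exact mul_div_mul_left _ _ (hb0 n).ne'
  have ht : Tendsto t atTop atTop := by
    have h1 : Tendsto (fun n => ((t n : ℕ) : ℝ)) atTop atTop := by
      apply tendsto_atTop_mono _ hbt
      intro n
      have h2 := hb1 n
      have h3 : (0:ℝ) ≤ (t n : ℝ) := Nat.cast_nonneg _
      nlinarith [hb0 n]
    exact tendsto_natCast_atTop_iff.mp h1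
  have hcomp := (spaG_tendsto hp0 hp1 hA1 hA2 i).comp ht
  exact Filter.Tendsto.congr (fun n => (heq n).symm) hcomp
end
end

section
/- Limit lemma for linear recurrences of real sequences: If (α_t)_{t≥1}, (β_t)_{t≥1}, (γ_t)_{t≥1} are real sequences satisfying α_{t+1} = (1 − β_t/t)·α_t + γ_t for all t ≥ 1, and lim_{t→∞} β_t = β > 0 and lim_{t→∞} γ_t = γ, then lim_{t→∞} α_t/t exists and equals γ/(1+β). -/
open Filter

open Finset in
/-- Lemma 3.1 of Chung–Lu type: if `α_{t+1} = (1 - β_t/t) α_t + γ_t` for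
all `t ≥ 1`, `β_t → β > 0` and `γ_t → γ`, then `α_t / t → γ / (1 + β)`. -/
theorem limit_of_linear_recurrence
    (α β' γ' : ℕ → ℝ) (β γ : ℝ) (hβ : 0 < β)
    (hrec : ∀ t : ℕ, 1 ≤ t → α (t + 1) = (1 - β' t / (t : ℝ)) * α t + γ' t)
    (hβ' : Tendsto β' atTop (nhds β)) (hγ' : Tendsto γ' atTop (nhds γ)) :
    Tendsto (fun t : ℕ => α t / (t : ℝ)) atTop (nhds (γ / (1 + β))) := by
  set L : ℝ := γ / (1 + β) with hLdef
  have h1β : (0:ℝ) < 1 + β := by linarith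
  have hL : L * (1 + β) = γ := div_mul_cancel₀ _ (ne_of_gt h1β)
  set ε : ℕ → ℝ := fun t => γ' t - γ - (β' t - β) * L with hεdef
  have hε : Tendsto ε atTop (nhds 0) := by
    have : Tendsto (fun t => γ' t - γ - (β' t - β) * L) atTop
        (nhds (γ - γ - (β - β) * L)) := ((hγ'.sub tendsto_const_nhds).sub
        ((hβ'.sub tendsto_const_nhds).mul_const L))
    simpa using this
  -- eventual good behavior
  have hev : ∀ᶠ t : ℕ in atTop, 1 ≤ t ∧ 0 ≤ β' t ∧ β' t ≤ (t : ℝ) := by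
    have h1 : ∀ᶠ t : ℕ in atTop, 0 < β' t := hβ'.eventually (eventually_gt_nhds hβ)
    have h2 : ∀ᶠ t : ℕ in atTop, β' t < β + 1 := hβ'.eventually (eventually_lt_nhds (lt_add_one β))
    have h3 : ∀ᶠ t : ℕ in atTop, β + 1 ≤ (t : ℝ) :=
      tendsto_natCast_atTop_atTop.eventually_ge_atTop (β + 1)
    filter_upwards [h1, h2, h3, eventually_ge_atTop 1] with t ht1 ht2 ht3 ht4
    exact ⟨ht4, le_of_lt ht1, le_trans (le_of_lt ht2) ht3⟩
  obtain ⟨T, hT⟩ := eventually_atTop.mp hev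
  -- key step inequality
  have key : ∀ t : ℕ, T ≤ t → |α (t+1) - L * (t+1)| ≤ |α t - L * t| + |ε t| := by
    intro t ht
    obtain ⟨ht1, ht2, ht3⟩ := hT t ht
    have htpos : (0:ℝ) < t := by exact_mod_cast ht1
    have hid : α (t+1) - L * (t+1) = (1 - β' t / t) * (α t - L * t) + ε t := by
      have htne : (t:ℝ) ≠ 0 := ne_of_gt htpos
      have ht0 : β' t / (t:ℝ) * t = β' t := div_mul_cancel₀ _ htne
      rw [hrec t ht1]
      simp only [hεdef]
      push_cast
      linear_combination (-1:ℝ) * hL - L * ht0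
    rw [hid]
    have habs : |1 - β' t / t| ≤ 1 := by
      rw [abs_le]
      constructor
      · have : β' t / t ≤ 1 := (div_le_one htpos).mpr ht3
        linarith
      · have : 0 ≤ β' t / t := div_nonneg ht2 (le_of_lt htpos)
        linarith
    calc |(1 - β' t / t) * (α t - L * t) + ε t|
        ≤ |(1 - β' t / t) * (α t - L * t)| + |ε t| := abs_add_le _ _
      _ ≤ |α t - L * t| + |ε t| := by
          rw [abs_mul]
          have := abs_nonneg (α t - L * t)
          nlinarith [abs_nonneg (1 - β' t / t)]
  -- induction bound
  set C : ℝ := |α T - L * T| with hC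
  have bound : ∀ t : ℕ, T ≤ t → |α t - L * t| ≤ C + ∑ k ∈ range t, |ε k| := by
    intro t ht
    induction t, ht using Nat.le_induction with
    | base =>
        simp only [hC]
        have : (0:ℝ) ≤ ∑ k ∈ range T, |ε k| := Finset.sum_nonneg fun k _ => abs_nonneg _
        push_cast
        linarith
    | succ n hn ih =>
        have := key n hn
        rw [Finset.sum_range_succ]
        push_cast
        push_cast at this ih
        linarith
  -- conclude
  rw [tendsto_iff_norm_sub_tendsto_zero]
  simp only [Real.norm_eq_abs]
  have hlim : Tendsto (fun t : ℕ => (C + ∑ k ∈ range t, |ε k|) / t) atTop (nhds 0) := by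
    have h1 : Tendsto (fun t : ℕ => C / t) atTop (nhds 0) :=
      tendsto_const_nhds.div_atTop tendsto_natCast_atTop_atTop
    have h2 : Tendsto (fun t : ℕ => ((t:ℝ))⁻¹ * ∑ k ∈ range t, |ε k|) atTop (nhds 0) := by
      have : Tendsto (fun t => |ε t|) atTop (nhds 0) := by
        simpa using hε.abs
      exact this.cesaro
    have := h1.add h2
    simp only [add_zero] at this
    refine this.congr fun t => ?_
    rw [add_div, inv_mul_eq_div]
  apply squeeze_zero_norm' _ hlim
  filter_upwards [eventually_ge_atTop (max T 1)] with t ht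
  have htT : T ≤ t := le_trans (le_max_left _ _) ht
  have ht1 : 1 ≤ t := le_trans (le_max_right _ _) ht
  have htpos : (0:ℝ) < t := by exact_mod_cast ht1
  have heq : |α t / t - L| = |α t - L * t| / t := by
    rw [show α t / (t:ℝ) - L = (α t - L * t) / t by field_simp]
    rw [abs_div, abs_of_pos htpos]
  rw [Real.norm_eq_abs, heq]
  rw [abs_of_nonneg (div_nonneg (abs_nonneg _) htpos.le)]
  exact div_le_div_of_nonneg_right (bound t htT) htpos.le
end

section
/- Azuma-type maximal inequality for near-supermartingales: Let (Ω, ℱ, P) be a probability space with a filtration ℱ_0 ⊆ ℱ_1 ⊆ … ⊆ ℱ_n, and let X_0, X_1, …, X_n be real random variables with X_t measurable with respect to ℱ_t for each t. Suppose that for some real constants β_1, …, β_n and nonnegative constants γ_1, …, γ_n one has E(X_t − X_{t−1} | ℱ_{t−1}) < β_t almost surely and |X_t − X_{t−1} − β_t| ≤ γ_t almost surely, for 1 ≤ t ≤ n. Then for all α > 0, P(there exists s with 0 ≤ s ≤ n such that X_s − X_0 ≥ Σ_{t=1}^{s} β_t + α) ≤ exp(−α² / (2·Σ_{t=1}^{n}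 γ_t²)). -/
open MeasureTheory ProbabilityTheory Filter

lemma aux_exp_le_affine {γ a x : ℝ} (hγ : 0 < γ) (hx : |x| ≤ γ) :
    Real.exp (a * x) ≤ Real.cosh (a * γ) + Real.sinh (a * γ) / γ * x := by
  obtain ⟨hx1, hx2⟩ := abs_le.mp hx
  have h2γ : (0:ℝ) < 2 * γ := by linarith
  have ht0 : 0 ≤ (γ + x) / (2 * γ) := div_nonneg (by linarith) (by linarith)
  have ht1 : 0 ≤ (γ - x) / (2 * γ) := div_nonneg (by linarith) (by linarith)
  have hsum : (γ + x) / (2 * γ) + (γ - x) / (2 * γ) = 1 := by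
    rw [← add_div, div_eq_one_iff_eq h2γ.ne']; ring
  have key := convexOn_exp.2 (Set.mem_univ (a * γ)) (Set.mem_univ (-(a * γ))) ht0 ht1 hsum
  simp only [smul_eq_mul] at key
  have harg : (γ + x) / (2 * γ) * (a * γ) + (γ - x) / (2 * γ) * -(a * γ) = a * x := by
    field_simp
    ring
  rw [harg] at key
  refine key.trans (le_of_eq ?_)
  rw [Real.cosh_eq, Real.sinh_eq]
  field_simp
  ring

lemma aux_cond_hoeffding {Ω : Type*} {m0 : MeasurableSpace Ω} {μ : Measure Ω}
    [IsProbabilityMeasure μ] {m : MeasurableSpace Ω} (hm : m ≤ m0)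
    {D : Ω → ℝ} (hD : Integrable D μ) {γ l : ℝ} (hγ : 0 ≤ γ) (hl : 0 ≤ l)
    (hbd : ∀ᵐ ω ∂μ, |D ω| ≤ γ) (hmean : μ[D|m] ≤ᵐ[μ] 0) :
    μ[fun ω => Real.exp (l * D ω)|m] ≤ᵐ[μ] fun _ => Real.exp (l ^ 2 * γ ^ 2 / 2) := by
  have hexp_int : Integrable (fun ω => Real.exp (l * D ω)) μ := by
    refine Integrable.mono' (integrable_const (Real.exp (l * γ)))
      (Real.continuous_exp.comp_aestronglyMeasurable (hD.1.const_mul l)) ?_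
    filter_upwards [hbd] with ω hω
    rw [Real.norm_eq_abs, abs_of_pos (Real.exp_pos _), Real.exp_le_exp]
    exact mul_le_mul_of_nonneg_left ((abs_le.mp hω).2) hl
  rcases hγ.lt_or_eq with hγpos | hγ0
  · -- 0 < γ
    have haff_int : Integrable (fun ω => Real.cosh (l * γ) + Real.sinh (l * γ) / γ * D ω) μ :=
      (integrable_const _).add (hD.const_mul _)
    have hptwise : ∀ᵐ ω ∂μ, Real.exp (l * D ω) ≤
        Real.cosh (l * γ) + Real.sinh (l * γ) / γ * D ω := by
      filter_upwards [hbd] with ω hω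
      exact aux_exp_le_affine hγpos hω
    have hmono := condExp_mono (μ := μ) (m := m) hexp_int haff_int hptwise
    have heq : μ[fun ω => Real.cosh (l * γ) + Real.sinh (l * γ) / γ * D ω|m]
        =ᵐ[μ] fun ω => Real.cosh (l * γ) + Real.sinh (l * γ) / γ * (μ[D|m]) ω := by
      have h1 : (fun ω => Real.cosh (l * γ) + Real.sinh (l * γ) / γ * D ω)
          = (fun _ : Ω => Real.cosh (l * γ)) + (Real.sinh (l * γ) / γ) • D := by
        funext ω; simp [smul_eq_mul]
      rw [h1]
      refine (condExp_add (integrable_const _) (hD.smul _) _).trans ?_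
      have h2 := condExp_smul (μ := μ) (m := m) (Real.sinh (l * γ) / γ) D
      filter_upwards [h2] with ω hω
      simp only [Pi.add_apply, hω, Pi.smul_apply, smul_eq_mul, condExp_const hm]
    refine hmono.trans (heq.le.trans ?_)
    filter_upwards [hmean] with ω hω
    have hsinh : 0 ≤ Real.sinh (l * γ) := by
      rw [← Real.sinh_zero]
      exact Real.sinh_le_sinh.mpr (by positivity)
    have h3 : Real.sinh (l * γ) / γ * (μ[D|m]) ω ≤ 0 :=
      mul_nonpos_of_nonneg_of_nonpos (by positivity) hω
    have h4 : Real.cosh (l * γ) ≤ Real.exp (l ^ 2 * γ ^ 2 / 2) := by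
      have := Real.cosh_le_exp_half_sq (l * γ)
      rwa [mul_pow] at this
    calc Real.cosh (l * γ) + Real.sinh (l * γ) / γ * (μ[D|m]) ω
        ≤ Real.cosh (l * γ) + 0 := by linarith
      _ ≤ Real.exp (l ^ 2 * γ ^ 2 / 2) := by simpa using h4
  · -- γ = 0
    have hD0 : ∀ᵐ ω ∂μ, Real.exp (l * D ω) = 1 := by
      filter_upwards [hbd] with ω hω
      have : D ω = 0 := abs_eq_zero.mp (le_antisymm (hγ0 ▸ hω) (abs_nonneg _))
      simp [this]
    have h1 : μ[fun ω => Real.exp (l * D ω)|m] =ᵐ[μ] fun _ => (1:ℝ) := by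
      refine (condExp_congr_ae (g := fun _ => (1:ℝ)) hD0).trans ?_
      rw [condExp_const hm]
    refine h1.le.trans ?_
    filter_upwards with ω
    exact Real.one_le_exp (by positivity)

lemma aux_supermartingale_maximal {Ω : Type*} {m0 : MeasurableSpace Ω} {μ : Measure Ω}
    [IsProbabilityMeasure μ] {𝒢 : Filtration ℕ m0} {f : ℕ → Ω → ℝ}
    (hsup : Supermartingale f 𝒢 μ) (hnonneg : ∀ i ω, 0 ≤ f i ω) {c : ℝ} (hc : 0 < c) (n : ℕ) :
    c * (μ {ω | ∃ k, k ≤ n ∧ c ≤ f k ω}).toReal ≤ μ[f 0] := by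
  set E : Set Ω := {ω | ∃ k, k ≤ n ∧ c ≤ f k ω} with hE
  have hEmeas : MeasurableSet E := by
    have : E = ⋃ k ∈ Finset.range (n + 1), {ω | c ≤ f k ω} := by
      ext ω
      simp [hE, Nat.lt_succ_iff]
    rw [this]
    refine Set.Finite.measurableSet_biUnion (Finset.range (n+1)).finite_toSet fun k _ => ?_
    exact measurableSet_le measurable_const ((hsup.stronglyAdapted k).measurable.le (𝒢.le k))
  set τ : Ω → ℕ∞ := fun ω => ((hittingBtwn f (Set.Ici c) 0 n ω : ℕ) : WithTop ℕ) with hτdef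
  have hτ : IsStoppingTime 𝒢 τ := hsup.stronglyAdapted.adapted.isStoppingTime_hittingBtwn measurableSet_Ici
  have hτle : ∀ ω, τ ω ≤ n := fun ω => by simp only [hτdef]; exact WithTop.coe_le_coe.mpr (hittingBtwn_le (u := f) (s := Set.Ici c) (n := 0) (m := n) ω)
  have hsv_int : Integrable (stoppedValue f τ) μ := by
    have := (hsup.neg.integrable_stoppedValue hτ hτle).neg
    have heq : -stoppedValue (-f) τ = stoppedValue f τ := by
      funext ω; simp [stoppedValue]
    rwa [heq] at this
  have key1 : μ[stoppedValue f τ] ≤ μ[f 0] := by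
    have h := hsup.neg.expected_stoppedValue_mono (isStoppingTime_const 𝒢 0) hτ
      (fun ω => by simp only [hτdef]; exact WithTop.coe_le_coe.mpr (Nat.zero_le _)) hτle
    rw [stoppedValue_const] at h
    have h1 : stoppedValue (-f) τ = -(stoppedValue f τ) := by
      funext ω; simp [stoppedValue]
    rw [h1] at h
    simp only [integral_neg, Pi.neg_apply, MeasureTheory.integral_neg] at h
    -- h : -∫ f 0 ≤ -∫ stoppedValue f τ  (hopefully)
    linarith [h]
  have key2 : c * (μ E).toReal ≤ μ[stoppedValue f τ] := by
    have hon : ∀ ω ∈ E, c ≤ stoppedValue f τ ω := by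
      rintro ω ⟨k, hk, hck⟩
      exact stoppedValue_hittingBtwn_mem ⟨k, ⟨Nat.zero_le _, hk⟩, hck⟩
    have h1 := setIntegral_ge_of_const_le_real hEmeas (measure_ne_top μ E) hon hsv_int.integrableOn
    have h2 : 0 ≤ ∫ ω in Eᶜ, stoppedValue f τ ω ∂μ :=
      setIntegral_nonneg hEmeas.compl fun ω _ => hnonneg _ ω
    have h3 := integral_add_compl hEmeas hsv_int
    simp only [Measure.real] at h1
    linarith
  exact key2.trans key1

lemma aux_telescope (g : ℕ → ℝ) : ∀ m : ℕ, ∑ s ∈ Finset.Icc 1 m, (g s - g (s - 1)) = g m - g 0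
  | 0 => by simp
  | (m + 1) => by
    rw [Finset.sum_Icc_succ_top (Nat.succ_le_succ (Nat.zero_le m)), aux_telescope g m]
    simp

/-- Azuma-type maximal inequality for near-supermartingales (Pittel et al.):
if `E(X_t - X_{t-1} | F_{t-1}) < β_t` a.s. and `|X_t - X_{t-1} - β_t| ≤ γ_t` a.s. for
`1 ≤ t ≤ n`, then for `α > 0`,
`P(∃ s ≤ n, X_s - X_0 ≥ ∑_{t≤s} β_t + α) ≤ exp(-α²/(2 ∑ γ_t²))`. -/
theorem azuma_maximal_inequality_supermartingale
    {Ω : Type*} [m0 : MeasureSpace Ω] [IsProbabilityMeasure (ℙ : Measure Ω)]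
    (n : ℕ) (F : Filtration ℕ m0.toMeasurableSpace)
    (X : ℕ → Ω → ℝ) (hadp : Adapted F X) (hint : ∀ t, Integrable (X t) ℙ)
    (β γ : ℕ → ℝ) (hγ : ∀ t, 0 ≤ γ t)
    (hdrift : ∀ t, 1 ≤ t → t ≤ n →
      ∀ᵐ ωp ∂ℙ, (ℙ[X t - X (t - 1)|F (t - 1)]) ωp < β t)
    (hbdd : ∀ t, 1 ≤ t → t ≤ n →
      ∀ᵐ ωp ∂ℙ, |X t ωp - X (t - 1) ωp - β t| ≤ γ t)
    (α : ℝ) (hα : 0 < α) :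
    (ℙ {ωp : Ω | ∃ s : ℕ, s ≤ n ∧
        (∑ t ∈ Finset.Icc 1 s, β t) + α ≤ X s ωp - X 0 ωp}).toReal ≤
      Real.exp (-α ^ 2 / (2 * ∑ t ∈ Finset.Icc 1 n, γ t ^ 2)) := by
  classical
  have hS0 : (0:ℝ) ≤ ∑ t ∈ Finset.Icc 1 n, γ t ^ 2 := Finset.sum_nonneg fun t _ => sq_nonneg _
  set S := ∑ t ∈ Finset.Icc 1 n, γ t ^ 2 with hSdef
  rcases hS0.lt_or_eq with hSpos | hS0'
  swap
  · rw [← hS0', mul_zero, div_zero, Real.exp_zero]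
    refine (ENNReal.toReal_mono (measure_ne_top _ _) (measure_mono (Set.subset_univ _))).trans ?_
    simp
  set l := α / S with hldef
  have hl : 0 < l := div_pos hα hSpos
  set Y : ℕ → Ω → ℝ := fun t ω => X (min t n) ω - X 0 ω - ∑ s ∈ Finset.Icc 1 (min t n), β s
    with hYdef
  set c : ℕ → ℝ := fun t => l ^ 2 / 2 * ∑ s ∈ Finset.Icc 1 (min t n), γ s ^ 2 with hcdef
  set M : ℕ → Ω → ℝ := fun t ω => Real.exp (l * Y t ω - c t) with hMdef
  set Γ := ∑ s ∈ Finset.Icc 1 n, γ s with hΓdef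
  clear_value S l Γ
  -- basic facts about c
  have hc0 : ∀ t, 0 ≤ c t := by
    intro t
    simp only [hcdef]
    exact mul_nonneg (by positivity) (Finset.sum_nonneg fun s _ => sq_nonneg _)
  have hc_mono : ∀ t, c t ≤ l ^ 2 / 2 * S := by
    intro t
    simp only [hcdef, hSdef]
    refine mul_le_mul_of_nonneg_left ?_ (by positivity)
    exact Finset.sum_le_sum_of_subset_of_nonneg
      (Finset.Icc_subset_Icc_right (min_le_right t n)) (fun i _ _ => sq_nonneg _)
  -- a.e. bounds all at once
  have hbd_all : ∀ᵐ ω ∂ℙ, ∀ s : ℕ, s ∈ Finset.Icc 1 n →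
      |X s ω - X (s - 1) ω - β s| ≤ γ s := by
    rw [ae_all_iff]
    intro s
    by_cases hs : s ∈ Finset.Icc 1 n
    · filter_upwards [hbdd s (Finset.mem_Icc.mp hs).1 (Finset.mem_Icc.mp hs).2] with ω hω _
      exact hω
    · filter_upwards with ω h
      exact absurd h hs
  -- bound on Y
  have hYbound : ∀ t ω, (∀ s : ℕ, s ∈ Finset.Icc 1 n → |X s ω - X (s - 1) ω - β s| ≤ γ s) →
      |Y t ω| ≤ Γ := by
    intro t ω hω
    have hmn : min t n ≤ n := min_le_right t n
    have htel : Y t ω = ∑ s ∈ Finset.Icc 1 (min t n), (X s ω - X (s - 1) ω - β s) := by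
      simp only [hYdef]
      rw [Finset.sum_sub_distrib,
        show (∑ s ∈ Finset.Icc 1 (min t n), (X s ω - X (s - 1) ω)) =
          X (min t n) ω - X 0 ω from aux_telescope (fun s => X s ω) (min t n)]
    rw [htel, hΓdef]
    refine (Finset.abs_sum_le_sum_abs _ _).trans ?_
    refine le_trans (Finset.sum_le_sum fun s hs => hω s ?_) ?_
    · exact Finset.mem_Icc.mpr ⟨(Finset.mem_Icc.mp hs).1, le_trans (Finset.mem_Icc.mp hs).2 hmn⟩
    · exact Finset.sum_le_sum_of_subset_of_nonneg (Finset.Icc_subset_Icc_right hmn)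
        (fun i _ _ => hγ i)
  -- M is adapted
  have hMadp : StronglyAdapted F M := by
    intro t
    have h1 : StronglyMeasurable[F t] fun ω => X (min t n) ω :=
      (hadp.stronglyAdapted (min t n)).mono (F.mono (min_le_left t n))
    have h2 : StronglyMeasurable[F t] fun ω => X 0 ω := (hadp.stronglyAdapted 0).mono (F.mono (Nat.zero_le t))
    exact Real.continuous_exp.comp_stronglyMeasurable
      ((stronglyMeasurable_const.mul ((h1.sub h2).sub stronglyMeasurable_const)).sub
        stronglyMeasurable_const)
  -- M is bounded a.e., hence integrable
  have hMbd : ∀ t, ∀ᵐ ω ∂ℙ, ‖M t ω‖ ≤ Real.exp (l * Γ) := by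
    intro t
    filter_upwards [hbd_all] with ω hω
    have hYb := hYbound t ω hω
    simp only [hMdef]
    rw [Real.norm_eq_abs, abs_of_pos (Real.exp_pos _), Real.exp_le_exp]
    have h1 : l * Y t ω ≤ l * Γ := mul_le_mul_of_nonneg_left (abs_le.mp hYb).2 hl.le
    have := hc0 t
    linarith
  have hMint : ∀ t, Integrable (M t) ℙ := fun t =>
    Integrable.mono' (integrable_const _) ((hMadp t).mono (F.le t)).aestronglyMeasurable (hMbd t)
  -- supermartingale step
  clear_value Y c M
  have hstep : ∀ t, ℙ[M (t + 1)|F t] ≤ᵐ[ℙ] M t := by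
    intro t
    by_cases htn : t < n
    · have hun : t + 1 ≤ n := htn
      have hmin1 : min (t + 1) n = t + 1 := min_eq_left hun
      have hmin0 : min t n = t := min_eq_left htn.le
      set D : Ω → ℝ := fun ω => X (t + 1) ω - X t ω - β (t + 1) with hDdef
      have hDint : Integrable D ℙ := by
        have h' : Integrable (X (t + 1) - X t - fun _ => β (t + 1)) ℙ :=
          ((hint (t + 1)).sub (hint t)).sub (integrable_const _)
        exact h'
      have hDbd : ∀ᵐ ω ∂ℙ, |D ω| ≤ γ (t + 1) := by
        filter_upwards [hbdd (t + 1) (Nat.succ_le_succ (Nat.zero_le t)) hun] with ω hω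
        simpa using hω
      have hDmean : ℙ[D|F t] ≤ᵐ[ℙ] 0 := by
        have hd := hdrift (t + 1) (Nat.succ_le_succ (Nat.zero_le t)) hun
        rw [Nat.add_sub_cancel] at hd
        have hce : ℙ[D|F t] =ᵐ[ℙ] ℙ[X (t + 1) - X t|F t] - fun _ => β (t + 1) := by
          have h1 : D = X (t + 1) - X t - fun _ => β (t + 1) := rfl
          rw [h1]
          refine (condExp_sub ((hint (t + 1)).sub (hint t)) (integrable_const _) _).trans ?_
          rw [condExp_const (F.le t)]
        filter_upwards [hd, hce] with ω h1 h2
        rw [h2]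
        simp only [Pi.sub_apply, Pi.zero_apply]
        linarith
      clear_value D
      have hoeff := aux_cond_hoeffding (F.le t) hDint (hγ (t + 1)) hl.le hDbd hDmean
      have hce2 : c (t + 1) = c t + l ^ 2 * γ (t + 1) ^ 2 / 2 := by
        simp only [hcdef, hmin1, hmin0]
        rw [Finset.sum_Icc_succ_top (Nat.succ_le_succ (Nat.zero_le t))]
        ring
      have hYe : ∀ ω, Y (t + 1) ω = Y t ω + D ω := by
        intro ω
        simp only [hYdef, hDdef, hmin1, hmin0]
        rw [Finset.sum_Icc_succ_top (Nat.succ_le_succ (Nat.zero_le t))]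
        ring
      have hMe : M (t + 1) = M t * fun ω => Real.exp (l * D ω - l ^ 2 * γ (t + 1) ^ 2 / 2) := by
        funext ω
        simp only [hMdef, Pi.mul_apply, ← Real.exp_add]
        congr 1
        rw [hYe ω, hce2]
        ring
      have hGint : Integrable (fun ω => Real.exp (l * D ω - l ^ 2 * γ (t + 1) ^ 2 / 2)) ℙ := by
        refine Integrable.mono' (integrable_const (Real.exp (l * γ (t + 1))))
          (Real.continuous_exp.comp_aestronglyMeasurable
            ((hDint.1.const_mul l).sub aestronglyMeasurable_const)) ?_
        filter_upwards [hDbd] with ω hω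
        rw [Real.norm_eq_abs, abs_of_pos (Real.exp_pos _), Real.exp_le_exp]
        have h1 : l * D ω ≤ l * γ (t + 1) := mul_le_mul_of_nonneg_left (abs_le.mp hω).2 hl.le
        have h2 : (0:ℝ) ≤ l ^ 2 * γ (t + 1) ^ 2 / 2 := by positivity
        linarith
      have hmul := condExp_mul_of_stronglyMeasurable_left (hMadp t) (hMe ▸ hMint (t + 1)) hGint
      have hG : ℙ[fun ω => Real.exp (l * D ω - l ^ 2 * γ (t + 1) ^ 2 / 2)|F t]
          ≤ᵐ[ℙ] fun _ => (1:ℝ) := by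
        have h1 : (fun ω => Real.exp (l * D ω - l ^ 2 * γ (t + 1) ^ 2 / 2))
            = Real.exp (-(l ^ 2 * γ (t + 1) ^ 2 / 2)) • fun ω => Real.exp (l * D ω) := by
          funext ω
          simp only [Pi.smul_apply, smul_eq_mul, ← Real.exp_add]
          ring_nf
        rw [h1]
        refine (condExp_smul (μ := ℙ) (m := F t) (Real.exp (-(l ^ 2 * γ (t + 1) ^ 2 / 2)))
          (fun ω => Real.exp (l * D ω))).trans_le ?_
        filter_upwards [hoeff] with ω hω
        simp only [Pi.smul_apply, smul_eq_mul]
        calc Real.exp (-(l ^ 2 * γ (t + 1) ^ 2 / 2)) * (ℙ[fun ω => Real.exp (l * D ω)|F t]) ω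
            ≤ Real.exp (-(l ^ 2 * γ (t + 1) ^ 2 / 2)) * Real.exp (l ^ 2 * γ (t + 1) ^ 2 / 2) :=
              mul_le_mul_of_nonneg_left hω (Real.exp_pos _).le
          _ = 1 := by rw [← Real.exp_add]; simp
      rw [hMe]
      refine hmul.trans_le ?_
      filter_upwards [hG] with ω hω
      simp only [Pi.mul_apply]
      have h0 : 0 ≤ M t ω := by simp only [hMdef]; positivity
      calc M t ω * (ℙ[fun ω => Real.exp (l * D ω - l ^ 2 * γ (t + 1) ^ 2 / 2)|F t]) ω
          ≤ M t ω * 1 := mul_le_mul_of_nonneg_left hω h0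
        _ = M t ω := mul_one _
    · push_neg at htn
      have hM1 : M (t + 1) = M t := by
        funext ω
        simp only [hMdef, hYdef, hcdef, min_eq_right (htn.trans (Nat.le_succ t)),
          min_eq_right htn]
      rw [hM1, condExp_of_stronglyMeasurable (F.le t) (hMadp t) (hMint t)]
  have hMsup : Supermartingale M F ℙ := supermartingale_nat hMadp hMint hstep
  -- the maximal inequality
  set cstar := Real.exp (l * α - l ^ 2 / 2 * S) with hcstar
  clear_value cstar
  have hcstarpos : 0 < cstar := hcstar ▸ Real.exp_pos _
  have hsub : {ωp : Ω | ∃ s : ℕ, s ≤ n ∧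
        (∑ t ∈ Finset.Icc 1 s, β t) + α ≤ X s ωp - X 0 ωp}
      ⊆ {ω : Ω | ∃ k, k ≤ n ∧ cstar ≤ M k ω} := by
    rintro ω ⟨s, hsn, hsa⟩
    refine ⟨s, hsn, ?_⟩
    have hmins : min s n = s := min_eq_left hsn
    have hYs : α ≤ Y s ω := by
      simp only [hYdef, hmins]
      linarith
    have hcs := hc_mono s
    simp only [hMdef, hcstar]
    rw [Real.exp_le_exp]
    have h1 : l * α ≤ l * Y s ω := mul_le_mul_of_nonneg_left hYs hl.le
    linarith
  have hMpos : ∀ i ω, 0 ≤ M i ω := by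
    intro i ω
    simp only [hMdef]
    positivity
  have hmax := aux_supermartingale_maximal hMsup hMpos hcstarpos n
  have hM0 : M 0 = fun _ => (1:ℝ) := by
    funext ω
    simp [hMdef, hYdef, hcdef]
  rw [hM0] at hmax
  simp only [integral_const, Measure.real, measure_univ, ENNReal.toReal_one, smul_eq_mul, one_mul, mul_one] at hmax
  have hmono := ENNReal.toReal_mono (measure_ne_top ℙ _) (measure_mono hsub)
  have h5 : (ℙ {ω : Ω | ∃ k, k ≤ n ∧ cstar ≤ M k ω}).toReal ≤ 1 / cstar := by
    rw [le_div_iff₀ hcstarpos]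
    linarith
  have harith : 1 / cstar = Real.exp (-α ^ 2 / (2 * S)) := by
    rw [hcstar, one_div, ← Real.exp_neg]
    congr 1
    rw [hldef]
    field_simp
    ring
  calc (ℙ {ωp : Ω | ∃ s : ℕ, s ≤ n ∧
        (∑ t ∈ Finset.Icc 1 s, β t) + α ≤ X s ωp - X 0 ωp}).toReal
      ≤ (ℙ {ω : Ω | ∃ k, k ≤ n ∧ cstar ≤ M k ω}).toReal := hmono
    _ ≤ 1 / cstar := h5
    _ = Real.exp (-α ^ 2 / (2 * S)) := harith
end
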